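/- arXiv:1006.0293 — 5 statements merged into one kernel-verified Lean document; each statement's English description precedes it below -/
import Mathlib

section
/- For all integers k ≥ 2, n ≥ 1, p ≥ 0, r ≥ 0, the group G(k,n,p,r) is isomorphic to (ℤ/pℤ) × (ℤ/rℤ); moreover there is such an isomorphism sending the image of c₂ to (1,0), the image of d₂ to (0,1), and the images of all other generators to the identity. (Algebraic core of Lemma 3.3: π₁ of the surgered manifold is ℤ/p ⊕ ℤ/r.) -/
/-- Generators of the presentation: `a1, b1, a2, b2`, the tilde generators
`ct = c̃`, `dt = d̃`, and `c i`, `d i` for `i : Fin k`, where `c i` denotes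
`c_{i+1}` (so `c ⟨0,_⟩ = c₁`, `c ⟨1,_⟩ = c₂`, …). -/
inductive Gen (k : ℕ) : Type
  | a1 | b1 | a2 | b2 | ct | dt
  | c : Fin k → Gen k
  | d : Fin k → Gen k

namespace Gen

variable (k : ℕ)

def A1 : FreeGroup (Gen k) := FreeGroup.of Gen.a1
def B1 : FreeGroup (Gen k) := FreeGroup.of Gen.b1
def A2 : FreeGroup (Gen k) := FreeGroup.of Gen.a2
def B2 : FreeGroup (Gen k) := FreeGroup.of Gen.b2
def Ct : FreeGroup (Gen k) := FreeGroup.of Gen.ct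
def Dt : FreeGroup (Gen k) := FreeGroup.of Gen.dt
def C (i : Fin k) : FreeGroup (Gen k) := FreeGroup.of (Gen.c i)
def D (i : Fin k) : FreeGroup (Gen k) := FreeGroup.of (Gen.d i)

end Gen

open scoped commutatorElement

open Gen in
/-- The relators of the presentation of `π₁(M)` from Lemma 3.2 (a relation
`w = v` is encoded as the relator `w * v⁻¹`). -/
def rels (k n p r : ℕ) : Set (FreeGroup (Gen k)) :=
  { x |
    -- a₂ = c̃⁻¹ a₁ c̃
    x = A2 k * ((Ct k)⁻¹ * A1 k * Ct k)⁻¹ ∨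
    -- b₂ = c̃⁻¹ b₁ c̃
    x = B2 k * ((Ct k)⁻¹ * B1 k * Ct k)⁻¹ ∨
    -- b₁ = c̃⁻¹ b₂ c̃
    x = B1 k * ((Ct k)⁻¹ * B2 k * Ct k)⁻¹ ∨
    -- [b₂, d̃] = 1
    x = ⁅B2 k, Dt k⁆ ∨
    -- [a₁⁻¹ b₁⁻¹ a₂, d̃] = 1
    x = ⁅(A1 k)⁻¹ * (B1 k)⁻¹ * A2 k, Dt k⁆ ∨
    -- [a₂⁻¹ b₂⁻¹ a₁, d̃] = 1
    x = ⁅(A2 k)⁻¹ * (B2 k)⁻¹ * A1 k, Dt k⁆ ∨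
    -- c̃⁻¹ a₁ a₂ c̃ a₁⁻¹ a₂⁻¹ = d̃
    x = (Ct k)⁻¹ * A1 k * A2 k * Ct k * (A1 k)⁻¹ * (A2 k)⁻¹ * (Dt k)⁻¹ ∨
    -- [a₁, d̃⁻¹] = c̃
    x = ⁅A1 k, (Dt k)⁻¹⁆ * (Ct k)⁻¹ ∨
    -- [b₁, d̃] = 1
    x = ⁅B1 k, Dt k⁆ ∨
    -- [a₁, b₁][a₂, b₂] = 1
    x = ⁅A1 k, B1 k⁆ * ⁅A2 k, B2 k⁆ ∨
    -- [c₁,d₁][c₂,d₂]⋯[c_k,d_k][c̃,d̃] = 1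
    x = (List.ofFn fun i : Fin k => ⁅C k i, D k i⁆).prod * ⁅Ct k, Dt k⁆ ∨
    -- relations involving c₁, d₁  (index 0)
    (∃ i : Fin k, (i : ℕ) = 0 ∧
      (x = ⁅(B1 k)⁻¹, (D k i)⁻¹⁆ * (A1 k)⁻¹ ∨      -- [b₁⁻¹,d₁⁻¹] = a₁
       x = ⁅(A1 k)⁻¹, D k i⁆ * (B1 k)⁻¹ ∨           -- [a₁⁻¹,d₁] = b₁
       x = ⁅(B2 k)⁻¹, (D k i)⁻¹⁆ * (C k i)⁻¹ ∨      -- [b₂⁻¹,d₁⁻¹] = c₁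
       x = ⁅B2 k, (C k i)⁻¹⁆ ^ n * (D k i)⁻¹ ∨      -- [b₂,c₁⁻¹]ⁿ = d₁
       x = ⁅A1 k, C k i⁆ ∨ x = ⁅B1 k, C k i⁆ ∨      -- [a₁,c₁] = [b₁,c₁] = 1
       x = ⁅A2 k, C k i⁆ ∨ x = ⁅A2 k, D k i⁆)) ∨    -- [a₂,c₁] = [a₂,d₁] = 1
    -- relations involving c₂, d₂  (index 1)
    (∃ i : Fin k, (i : ℕ) = 1 ∧
      (x = ⁅(B2 k)⁻¹, (D k i)⁻¹⁆ * ((C k i) ^ p)⁻¹ ∨  -- [b₂⁻¹,d₂⁻¹] = c₂ᵖ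
       x = ⁅B2 k, (C k i)⁻¹⁆ * ((D k i) ^ r)⁻¹)) ∨    -- [b₂,c₂⁻¹] = d₂ʳ
    -- relations [b₂⁻¹,d_i⁻¹] = c_i, [b₂,c_i⁻¹] = d_i for 3 ≤ i ≤ k
    (∃ i : Fin k, 2 ≤ (i : ℕ) ∧
      (x = ⁅(B2 k)⁻¹, (D k i)⁻¹⁆ * (C k i)⁻¹ ∨
       x = ⁅B2 k, (C k i)⁻¹⁆ * (D k i)⁻¹)) ∨
    -- commuting relations for 2 ≤ i ≤ k
    (∃ i : Fin k, 1 ≤ (i : ℕ) ∧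
      (x = ⁅A2 k, C k i⁆ ∨ x = ⁅A2 k, D k i⁆ ∨
       x = ⁅A1 k, C k i⁆ ∨ x = ⁅B1 k, D k i⁆ ∨
       x = ⁅A1 k, D k i⁆ ∨ x = ⁅B1 k, C k i⁆)) }

/-- The group `G(k,n,p,r)` of Lemma 3.2/3.3: the fundamental group of the
surgered manifold, given by the above presentation. -/
abbrev G (k n p r : ℕ) : Type := PresentedGroup (rels k n p r)

/-- The image in `G k n p r` of a generator. -/
abbrev gen (k n p r : ℕ) (g : Gen k) : G k n p r := PresentedGroup.of g

namespace GAux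
open Gen

/-- Abstract group-theoretic core: the relations force `a₁ = b₁ = 1`. -/
lemma key_ab {H : Type*} [Group H] (a1 b1 a2 b2 ct dt c1 d1 : H) (n : ℕ)
    (h2 : ct⁻¹ * b1 * ct = b2) (h3 : ct⁻¹ * b2 * ct = b1)
    (h4 : ⁅b2, dt⁆ = 1) (h9 : ⁅b1, dt⁆ = 1)
    (h5 : ⁅a1⁻¹ * b1⁻¹ * a2, dt⁆ = 1) (h6 : ⁅a2⁻¹ * b2⁻¹ * a1, dt⁆ = 1)
    (h8 : ⁅a1, dt⁻¹⁆ = ct)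
    (h15 : ⁅b2, c1⁻¹⁆ ^ n = d1) (h16 : ⁅b1, c1⁆ = 1)
    (h12 : ⁅b1⁻¹, d1⁻¹⁆ = a1) (h13 : ⁅a1⁻¹, d1⁆ = b1) :
    a1 = 1 ∧ b1 = 1 := by
  have cb1 : Commute b1 dt := commutatorElement_eq_one_iff_commute.mp h9
  have cb2 : Commute b2 dt := commutatorElement_eq_one_iff_commute.mp h4
  have cw : Commute (a1⁻¹ * b1⁻¹ * a2) dt := commutatorElement_eq_one_iff_commute.mp h5
  have cv : Commute (a2⁻¹ * b2⁻¹ * a1) dt := commutatorElement_eq_one_iff_commute.mp h6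
  have hP : dt⁻¹ * a1 * dt = ct⁻¹ * a1 := by rw [← h8]; group
  have hb1' : dt⁻¹ * b1 * dt = b1 := by
    calc dt⁻¹ * b1 * dt = dt⁻¹ * (b1 * dt) := by group
      _ = dt⁻¹ * (dt * b1) := by rw [cb1.eq]
      _ = b1 := by group
  have hb2' : dt⁻¹ * b2 * dt = b2 := by
    calc dt⁻¹ * b2 * dt = dt⁻¹ * (b2 * dt) := by group
      _ = dt⁻¹ * (dt * b2) := by rw [cb2.eq]
      _ = b2 := by group
  have e1 : dt⁻¹ * (a1⁻¹ * b1⁻¹ * a2) * dt = a1⁻¹ * b1⁻¹ * a2 := by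
    calc dt⁻¹ * (a1⁻¹ * b1⁻¹ * a2) * dt = dt⁻¹ * ((a1⁻¹ * b1⁻¹ * a2) * dt) := by group
      _ = dt⁻¹ * (dt * (a1⁻¹ * b1⁻¹ * a2)) := by rw [cw.eq]
      _ = a1⁻¹ * b1⁻¹ * a2 := by group
  have e2 : dt⁻¹ * (a2⁻¹ * b2⁻¹ * a1) * dt = a2⁻¹ * b2⁻¹ * a1 := by
    calc dt⁻¹ * (a2⁻¹ * b2⁻¹ * a1) * dt = dt⁻¹ * ((a2⁻¹ * b2⁻¹ * a1) * dt) := by group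
      _ = dt⁻¹ * (dt * (a2⁻¹ * b2⁻¹ * a1)) := by rw [cv.eq]
      _ = a2⁻¹ * b2⁻¹ * a1 := by group
  have hQ : dt⁻¹ * a2 * dt = b1 * ct⁻¹ * b1⁻¹ * a2 := by
    calc dt⁻¹ * a2 * dt
        = (dt⁻¹ * b1 * dt) * (dt⁻¹ * a1 * dt) * (dt⁻¹ * (a1⁻¹ * b1⁻¹ * a2) * dt) := by group
      _ = b1 * (ct⁻¹ * a1) * (a1⁻¹ * b1⁻¹ * a2) := by rw [hb1', hP, e1]
      _ = b1 * ct⁻¹ * b1⁻¹ * a2 := by group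
  have e2' : (b1 * ct⁻¹ * b1⁻¹ * a2)⁻¹ * b2⁻¹ * (ct⁻¹ * a1) = a2⁻¹ * b2⁻¹ * a1 := by
    calc (b1 * ct⁻¹ * b1⁻¹ * a2)⁻¹ * b2⁻¹ * (ct⁻¹ * a1)
        = (dt⁻¹ * a2 * dt)⁻¹ * (dt⁻¹ * b2 * dt)⁻¹ * (dt⁻¹ * a1 * dt) := by rw [hQ, hb2', hP]
      _ = dt⁻¹ * (a2⁻¹ * b2⁻¹ * a1) * dt := by group
      _ = a2⁻¹ * b2⁻¹ * a1 := e2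
  have t1 : b1 * ct * b1⁻¹ * b2⁻¹ * ct⁻¹ = b2⁻¹ := by
    calc b1 * ct * b1⁻¹ * b2⁻¹ * ct⁻¹
        = a2 * ((b1 * ct⁻¹ * b1⁻¹ * a2)⁻¹ * b2⁻¹ * (ct⁻¹ * a1)) * a1⁻¹ := by group
      _ = a2 * (a2⁻¹ * b2⁻¹ * a1) * a1⁻¹ := by rw [e2']
      _ = b2⁻¹ := by group
  have t2 : ct * (b2 * b1) * ct⁻¹ = b2 * b1 := by
    calc ct * (b2 * b1) * ct⁻¹
        = (b1⁻¹ * (b1 * ct * b1⁻¹ * b2⁻¹ * ct⁻¹))⁻¹ := by group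
      _ = (b1⁻¹ * b2⁻¹)⁻¹ := by rw [t1]
      _ = b2 * b1 := by group
  have t3 : ct⁻¹ * (b2 * b1) * ct = b2 * b1 := by
    calc ct⁻¹ * (b2 * b1) * ct = ct⁻¹ * (ct * (b2 * b1) * ct⁻¹) * ct := by rw [t2]
      _ = b2 * b1 := by group
  have hbb : Commute b1 b2 := by
    have : b1 * b2 = b2 * b1 := by
      calc b1 * b2 = (ct⁻¹ * b2 * ct) * (ct⁻¹ * b1 * ct) := by rw [h3, h2]
        _ = ct⁻¹ * (b2 * b1) * ct := by group
        _ = b2 * b1 := t3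
    exact this
  have hc1 : Commute b1 c1 := commutatorElement_eq_one_iff_commute.mp h16
  have hbd1 : Commute b1 d1 := by
    rw [← h15]
    refine Commute.pow_right ?_ n
    rw [commutatorElement_def]
    exact ((hbb.mul_right hc1.inv_right).mul_right hbb.inv_right).mul_right hc1.inv_right.inv_right
  have ha1 : a1 = 1 := by
    rw [← h12]
    exact commutatorElement_eq_one_iff_commute.mpr hbd1.inv_left.inv_right
  refine ⟨ha1, ?_⟩
  rw [← h13, ha1]
  simp [commutatorElement_def]

lemma prod_ofFn_ite {M : Type*} [Monoid M] :
    ∀ (m j : ℕ), j < m → ∀ z : M,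
      (List.ofFn fun i : Fin m => if (i : ℕ) = j then z else 1).prod = z := by
  intro m
  induction m with
  | zero => intro j hj z; exact absurd hj (Nat.not_lt_zero j)
  | succ m ih =>
    intro j hj z
    rw [List.ofFn_succ, List.prod_cons]
    cases j with
    | zero =>
      have htail :
          (List.ofFn fun i : Fin m => if ((i.succ : Fin (m+1)) : ℕ) = 0 then z else 1).prod
            = 1 := by
        apply List.prod_eq_one
        intro x hx
        rw [List.mem_ofFn] at hx
        obtain ⟨i, rfl⟩ := hx
        simp [Fin.val_succ]
      simpa using htail
    | succ j =>
      have hcast : (fun i : Fin m => if ((i.succ : Fin (m+1)) : ℕ) = j + 1 then z else 1)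
          = fun i : Fin m => if (i : ℕ) = j then z else 1 := by
        funext i
        simp [Fin.val_succ]
      simp only [hcast]
      rw [ih j (by omega) z]
      simp

variable {k n p r : ℕ}

lemma mk_of (g : Gen k) :
    PresentedGroup.mk (rels k n p r) (FreeGroup.of g) = PresentedGroup.of g := rfl

lemma relE {x : FreeGroup (Gen k)} (hx : x ∈ rels k n p r) :
    PresentedGroup.mk (rels k n p r) x = 1 :=
  (QuotientGroup.eq_one_iff x).2 (Subgroup.subset_normalClosure hx)

end GAux
namespace GAux
open Gen

variable {k n p r : ℕ}

lemma collapse (hk : 2 ≤ k) :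
    (PresentedGroup.of Gen.a1 : G k n p r) = 1 ∧
    (PresentedGroup.of Gen.b1 : G k n p r) = 1 ∧
    (PresentedGroup.of Gen.a2 : G k n p r) = 1 ∧
    (PresentedGroup.of Gen.b2 : G k n p r) = 1 ∧
    (PresentedGroup.of Gen.ct : G k n p r) = 1 ∧
    (PresentedGroup.of Gen.dt : G k n p r) = 1 ∧
    (∀ i : Fin k, (i : ℕ) ≠ 1 →
      (PresentedGroup.of (Gen.c i) : G k n p r) = 1 ∧
      (PresentedGroup.of (Gen.d i) : G k n p r) = 1) ∧
    (PresentedGroup.of (Gen.c ⟨1, by omega⟩) : G k n p r) ^ p = 1 ∧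
    (PresentedGroup.of (Gen.d ⟨1, by omega⟩) : G k n p r) ^ r = 1 ∧
    Commute (PresentedGroup.of (Gen.c ⟨1, by omega⟩) : G k n p r)
      (PresentedGroup.of (Gen.d ⟨1, by omega⟩) : G k n p r) := by
  set i0 : Fin k := ⟨0, by omega⟩ with hi0def
  set i1 : Fin k := ⟨1, by omega⟩ with hi1def
  set o : Gen k → G k n p r := fun g => PresentedGroup.of g with hodef
  have hv0 : (i0 : ℕ) = 0 := rfl
  have hv1 : (i1 : ℕ) = 1 := rfl
  -- extract the relations
  have h1 : o Gen.a2 = (o Gen.ct)⁻¹ * o Gen.a1 * o Gen.ct := by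
    have h := relE (k := k) (n := n) (p := p) (r := r)
      (x := A2 k * ((Ct k)⁻¹ * A1 k * Ct k)⁻¹) (Or.inl rfl)
    simp only [map_mul, map_inv, A2, A1, Ct, mk_of] at h
    exact mul_inv_eq_one.mp h
  have h2 : o Gen.b2 = (o Gen.ct)⁻¹ * o Gen.b1 * o Gen.ct := by
    have h := relE (k := k) (n := n) (p := p) (r := r)
      (x := B2 k * ((Ct k)⁻¹ * B1 k * Ct k)⁻¹) (Or.inr (Or.inl rfl))
    simp only [map_mul, map_inv, B2, B1, Ct, mk_of] at h
    exact mul_inv_eq_one.mp h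
  have h3 : o Gen.b1 = (o Gen.ct)⁻¹ * o Gen.b2 * o Gen.ct := by
    have h := relE (k := k) (n := n) (p := p) (r := r)
      (x := B1 k * ((Ct k)⁻¹ * B2 k * Ct k)⁻¹) (Or.inr (Or.inr (Or.inl rfl)))
    simp only [map_mul, map_inv, B2, B1, Ct, mk_of] at h
    exact mul_inv_eq_one.mp h
  have h4 : ⁅o Gen.b2, o Gen.dt⁆ = 1 := by
    have h := relE (k := k) (n := n) (p := p) (r := r)
      (x := ⁅B2 k, Dt k⁆) (Or.inr (Or.inr (Or.inr (Or.inl rfl))))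
    simpa only [map_commutatorElement, B2, Dt, mk_of] using h
  have h5 : ⁅(o Gen.a1)⁻¹ * (o Gen.b1)⁻¹ * o Gen.a2, o Gen.dt⁆ = 1 := by
    have h := relE (k := k) (n := n) (p := p) (r := r)
      (x := ⁅(A1 k)⁻¹ * (B1 k)⁻¹ * A2 k, Dt k⁆)
      (Or.inr (Or.inr (Or.inr (Or.inr (Or.inl rfl)))))
    simpa only [map_commutatorElement, map_mul, map_inv, A1, B1, A2, Dt, mk_of] using h
  have h6 : ⁅(o Gen.a2)⁻¹ * (o Gen.b2)⁻¹ * o Gen.a1, o Gen.dt⁆ = 1 := by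
    have h := relE (k := k) (n := n) (p := p) (r := r)
      (x := ⁅(A2 k)⁻¹ * (B2 k)⁻¹ * A1 k, Dt k⁆)
      (Or.inr (Or.inr (Or.inr (Or.inr (Or.inr (Or.inl rfl))))))
    simpa only [map_commutatorElement, map_mul, map_inv, A1, B2, A2, Dt, mk_of] using h
  have h7 : (o Gen.ct)⁻¹ * o Gen.a1 * o Gen.a2 * o Gen.ct * (o Gen.a1)⁻¹ * (o Gen.a2)⁻¹
      = o Gen.dt := by
    have h := relE (k := k) (n := n) (p := p) (r := r)
      (x := (Ct k)⁻¹ * A1 k * A2 k * Ct k * (A1 k)⁻¹ * (A2 k)⁻¹ * (Dt k)⁻¹)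
      (Or.inr (Or.inr (Or.inr (Or.inr (Or.inr (Or.inr (Or.inl rfl)))))))
    simp only [map_mul, map_inv, A1, A2, Ct, Dt, mk_of] at h
    exact mul_inv_eq_one.mp h
  have h8 : ⁅o Gen.a1, (o Gen.dt)⁻¹⁆ = o Gen.ct := by
    have h := relE (k := k) (n := n) (p := p) (r := r)
      (x := ⁅A1 k, (Dt k)⁻¹⁆ * (Ct k)⁻¹)
      (Or.inr (Or.inr (Or.inr (Or.inr (Or.inr (Or.inr (Or.inr (Or.inl rfl))))))))
    simp only [map_mul, map_inv, map_commutatorElement, A1, Ct, Dt, mk_of] at h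
    exact mul_inv_eq_one.mp h
  have h9 : ⁅o Gen.b1, o Gen.dt⁆ = 1 := by
    have h := relE (k := k) (n := n) (p := p) (r := r)
      (x := ⁅B1 k, Dt k⁆)
      (Or.inr (Or.inr (Or.inr (Or.inr (Or.inr (Or.inr (Or.inr (Or.inr (Or.inl rfl)))))))))
    simpa only [map_commutatorElement, B1, Dt, mk_of] using h
  have h11 : (List.ofFn fun i : Fin k => ⁅o (Gen.c i), o (Gen.d i)⁆).prod
      * ⁅o Gen.ct, o Gen.dt⁆ = 1 := by
    have h := relE (k := k) (n := n) (p := p) (r := r)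
      (x := (List.ofFn fun i : Fin k => ⁅C k i, D k i⁆).prod * ⁅Ct k, Dt k⁆)
      (Or.inr (Or.inr (Or.inr (Or.inr (Or.inr (Or.inr (Or.inr (Or.inr (Or.inr (Or.inr
        (Or.inl rfl)))))))))))
    simpa only [map_mul, map_list_prod, List.map_ofFn, Function.comp_def,
      map_commutatorElement, C, D, Ct, Dt, mk_of] using h
  have h12 : ⁅(o Gen.b1)⁻¹, (o (Gen.d i0))⁻¹⁆ = o Gen.a1 := by
    have h := relE (k := k) (n := n) (p := p) (r := r)
      (x := ⁅(B1 k)⁻¹, (D k i0)⁻¹⁆ * (A1 k)⁻¹)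
      (Or.inr (Or.inr (Or.inr (Or.inr (Or.inr (Or.inr (Or.inr (Or.inr (Or.inr (Or.inr
        (Or.inr (Or.inl ⟨i0, rfl, Or.inl rfl⟩))))))))))))
    simp only [map_mul, map_inv, map_commutatorElement, A1, B1, D, mk_of] at h
    exact mul_inv_eq_one.mp h
  have h13 : ⁅(o Gen.a1)⁻¹, o (Gen.d i0)⁆ = o Gen.b1 := by
    have h := relE (k := k) (n := n) (p := p) (r := r)
      (x := ⁅(A1 k)⁻¹, D k i0⁆ * (B1 k)⁻¹)
      (Or.inr (Or.inr (Or.inr (Or.inr (Or.inr (Or.inr (Or.inr (Or.inr (Or.inr (Or.inr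
        (Or.inr (Or.inl ⟨i0, rfl, Or.inr (Or.inl rfl)⟩))))))))))))
    simp only [map_mul, map_inv, map_commutatorElement, A1, B1, D, mk_of] at h
    exact mul_inv_eq_one.mp h
  have h14 : ⁅(o Gen.b2)⁻¹, (o (Gen.d i0))⁻¹⁆ = o (Gen.c i0) := by
    have h := relE (k := k) (n := n) (p := p) (r := r)
      (x := ⁅(B2 k)⁻¹, (D k i0)⁻¹⁆ * (C k i0)⁻¹)
      (Or.inr (Or.inr (Or.inr (Or.inr (Or.inr (Or.inr (Or.inr (Or.inr (Or.inr (Or.inr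
        (Or.inr (Or.inl ⟨i0, rfl, Or.inr (Or.inr (Or.inl rfl))⟩))))))))))))
    simp only [map_mul, map_inv, map_commutatorElement, B2, C, D, mk_of] at h
    exact mul_inv_eq_one.mp h
  have h15 : ⁅o Gen.b2, (o (Gen.c i0))⁻¹⁆ ^ n = o (Gen.d i0) := by
    have h := relE (k := k) (n := n) (p := p) (r := r)
      (x := ⁅B2 k, (C k i0)⁻¹⁆ ^ n * (D k i0)⁻¹)
      (Or.inr (Or.inr (Or.inr (Or.inr (Or.inr (Or.inr (Or.inr (Or.inr (Or.inr (Or.inr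
        (Or.inr (Or.inl ⟨i0, rfl, Or.inr (Or.inr (Or.inr (Or.inl rfl)))⟩))))))))))))
    simp only [map_mul, map_inv, map_pow, map_commutatorElement, B2, C, D, mk_of] at h
    exact mul_inv_eq_one.mp h
  have h16 : ⁅o Gen.b1, o (Gen.c i0)⁆ = 1 := by
    have h := relE (k := k) (n := n) (p := p) (r := r)
      (x := ⁅B1 k, C k i0⁆)
      (Or.inr (Or.inr (Or.inr (Or.inr (Or.inr (Or.inr (Or.inr (Or.inr (Or.inr (Or.inr
        (Or.inr (Or.inl ⟨i0, rfl, Or.inr (Or.inr (Or.inr (Or.inr (Or.inr (Or.inl rfl)))))⟩))))))))))))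
    simpa only [map_commutatorElement, B1, C, mk_of] using h
  have h17 : ⁅(o Gen.b2)⁻¹, (o (Gen.d i1))⁻¹⁆ = (o (Gen.c i1)) ^ p := by
    have h := relE (k := k) (n := n) (p := p) (r := r)
      (x := ⁅(B2 k)⁻¹, (D k i1)⁻¹⁆ * ((C k i1) ^ p)⁻¹)
      (Or.inr (Or.inr (Or.inr (Or.inr (Or.inr (Or.inr (Or.inr (Or.inr (Or.inr (Or.inr
        (Or.inr (Or.inr (Or.inl ⟨i1, rfl, Or.inl rfl⟩)))))))))))))
    simp only [map_mul, map_inv, map_pow, map_commutatorElement, B2, C, D, mk_of] at h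
    exact mul_inv_eq_one.mp h
  have h18 : ⁅o Gen.b2, (o (Gen.c i1))⁻¹⁆ = (o (Gen.d i1)) ^ r := by
    have h := relE (k := k) (n := n) (p := p) (r := r)
      (x := ⁅B2 k, (C k i1)⁻¹⁆ * ((D k i1) ^ r)⁻¹)
      (Or.inr (Or.inr (Or.inr (Or.inr (Or.inr (Or.inr (Or.inr (Or.inr (Or.inr (Or.inr
        (Or.inr (Or.inr (Or.inl ⟨i1, rfl, Or.inr rfl⟩)))))))))))))
    simp only [map_mul, map_inv, map_pow, map_commutatorElement, B2, C, D, mk_of] at h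
    exact mul_inv_eq_one.mp h
  have h19 : ∀ i : Fin k, 2 ≤ (i : ℕ) →
      ⁅(o Gen.b2)⁻¹, (o (Gen.d i))⁻¹⁆ = o (Gen.c i) ∧
      ⁅o Gen.b2, (o (Gen.c i))⁻¹⁆ = o (Gen.d i) := by
    intro i hi
    constructor
    · have h := relE (k := k) (n := n) (p := p) (r := r)
        (x := ⁅(B2 k)⁻¹, (D k i)⁻¹⁆ * (C k i)⁻¹)
        (Or.inr (Or.inr (Or.inr (Or.inr (Or.inr (Or.inr (Or.inr (Or.inr (Or.inr (Or.inr
          (Or.inr (Or.inr (Or.inr (Or.inl ⟨i, hi, Or.inl rfl⟩))))))))))))))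
      simp only [map_mul, map_inv, map_commutatorElement, B2, C, D, mk_of] at h
      exact mul_inv_eq_one.mp h
    · have h := relE (k := k) (n := n) (p := p) (r := r)
        (x := ⁅B2 k, (C k i)⁻¹⁆ * (D k i)⁻¹)
        (Or.inr (Or.inr (Or.inr (Or.inr (Or.inr (Or.inr (Or.inr (Or.inr (Or.inr (Or.inr
          (Or.inr (Or.inr (Or.inr (Or.inl ⟨i, hi, Or.inr rfl⟩))))))))))))))
      simp only [map_mul, map_inv, map_commutatorElement, B2, C, D, mk_of] at h
      exact mul_inv_eq_one.mp h
  -- collapse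
  obtain ⟨ha1, hb1⟩ := key_ab (o Gen.a1) (o Gen.b1) (o Gen.a2) (o Gen.b2) (o Gen.ct)
    (o Gen.dt) (o (Gen.c i0)) (o (Gen.d i0)) n h2.symm h3.symm h4 h9 h5 h6 h8 h15 h16 h12 h13
  have ha2 : o Gen.a2 = 1 := by rw [h1, ha1]; group
  have hb2 : o Gen.b2 = 1 := by
    have hcon : (o Gen.ct)⁻¹ * o Gen.b2 * o Gen.ct = 1 := by rw [← h3, hb1]
    calc o Gen.b2 = o Gen.ct * ((o Gen.ct)⁻¹ * o Gen.b2 * o Gen.ct) * (o Gen.ct)⁻¹ := by group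
      _ = o Gen.ct * 1 * (o Gen.ct)⁻¹ := by rw [hcon]
      _ = 1 := by group
  have hct : o Gen.ct = 1 := by rw [← h8, ha1]; simp [commutatorElement_def]
  have hdt : o Gen.dt = 1 := by rw [← h7, ha1, ha2, hct]; group
  have hc0 : o (Gen.c i0) = 1 := by rw [← h14, hb2]; simp [commutatorElement_def]
  have hd0 : o (Gen.d i0) = 1 := by rw [← h15, hb2]; simp [commutatorElement_def]
  have hcd : ∀ i : Fin k, (i : ℕ) ≠ 1 → o (Gen.c i) = 1 ∧ o (Gen.d i) = 1 := by
    intro i hi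
    rcases Nat.lt_or_ge (i : ℕ) 2 with hlt | hge
    · have : i = i0 := Fin.ext (by omega)
      rw [this]; exact ⟨hc0, hd0⟩
    · obtain ⟨hci, hdi⟩ := h19 i hge
      have hdi1 : o (Gen.d i) = 1 := by rw [← hdi, hb2]; simp [commutatorElement_def]
      have hci1 : o (Gen.c i) = 1 := by rw [← hci, hb2]; simp [commutatorElement_def]
      exact ⟨hci1, hdi1⟩
  have hcp : (o (Gen.c i1)) ^ p = 1 := by rw [← h17, hb2]; simp [commutatorElement_def]
  have hdr : (o (Gen.d i1)) ^ r = 1 := by rw [← h18, hb2]; simp [commutatorElement_def]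
  have hc2d2 : Commute (o (Gen.c i1)) (o (Gen.d i1)) := by
    have hfun : (fun i : Fin k => ⁅o (Gen.c i), o (Gen.d i)⁆)
        = fun i : Fin k => if (i : ℕ) = 1 then ⁅o (Gen.c i1), o (Gen.d i1)⁆ else 1 := by
      funext i
      by_cases hi : (i : ℕ) = 1
      · have hii : i = i1 := Fin.ext (by omega)
        subst hii
        rw [if_pos hv1]
      · rw [if_neg hi, (hcd i hi).1]
        simp [commutatorElement_def]
    rw [hfun] at h11
    rw [prod_ofFn_ite k 1 (by omega) _] at h11
    have : ⁅o (Gen.c i1), o (Gen.d i1)⁆ = 1 := by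
      rw [hct, hdt] at h11
      simpa [commutatorElement_def] using h11
    exact commutatorElement_eq_one_iff_commute.mp this
  exact ⟨ha1, hb1, ha2, hb2, hct, hdt, hcd, hcp, hdr, hc2d2⟩

end GAux
namespace GAux

lemma comm_assoc_helper {H : Type*} [Group H] (A A' B B' : H) (h : B * A' = A' * B) :
    (A * A') * (B * B') = (A * B) * (A' * B') := by
  calc (A * A') * (B * B') = A * (A' * B) * B' := by group
    _ = A * (B * A') * B' := by rw [← h]
    _ = (A * B) * (A' * B') := by group

/-- The homomorphism `ZMod m →+ Additive H` determined by an element `g` with `g ^ m = 1`. -/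
noncomputable def zmodHom {H : Type*} [Group H] (m : ℕ) (g : H) (hg : g ^ m = 1) :
    ZMod m →+ Additive H :=
  ZMod.lift m ⟨AddMonoidHom.mk' (fun z => Additive.ofMul (g ^ z))
      (fun z w => by show Additive.ofMul (g ^ (z + w)) = _; rw [zpow_add]; rfl), by
    show Additive.ofMul (g ^ (m : ℤ)) = 0
    rw [zpow_natCast, hg]; rfl⟩

lemma zmodHom_coe {H : Type*} [Group H] (m : ℕ) (g : H) (hg : g ^ m = 1) (z : ℤ) :
    Additive.toMul (zmodHom m g hg ((z : ZMod m))) = g ^ z := by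
  unfold zmodHom
  rw [ZMod.lift_coe]
  rfl

lemma zmodHom_commute {H : Type*} [Group H] {m₁ m₂ : ℕ} {g₁ g₂ : H}
    (h₁ : g₁ ^ m₁ = 1) (h₂ : g₂ ^ m₂ = 1) (hc : Commute g₁ g₂)
    (x : ZMod m₂) (y : ZMod m₁) :
    Additive.toMul (zmodHom m₂ g₂ h₂ x) * Additive.toMul (zmodHom m₁ g₁ h₁ y)
      = Additive.toMul (zmodHom m₁ g₁ h₁ y) * Additive.toMul (zmodHom m₂ g₂ h₂ x) := by
  obtain ⟨z, rfl⟩ := ZMod.intCast_surjective x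
  obtain ⟨w, rfl⟩ := ZMod.intCast_surjective y
  rw [zmodHom_coe, zmodHom_coe]
  exact ((hc.zpow_zpow w z).symm).eq

/-- The homomorphism `Multiplicative (ZMod m₁ × ZMod m₂) →* H` determined by two commuting
elements `g₁, g₂` with `g₁ ^ m₁ = 1` and `g₂ ^ m₂ = 1`. -/
noncomputable def pairHom {H : Type*} [Group H] (m₁ m₂ : ℕ) (g₁ g₂ : H)
    (h₁ : g₁ ^ m₁ = 1) (h₂ : g₂ ^ m₂ = 1) (hc : Commute g₁ g₂) :
    Multiplicative (ZMod m₁ × ZMod m₂) →* H :=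
  MonoidHom.mk' (fun x => Additive.toMul (zmodHom m₁ g₁ h₁ x.toAdd.1)
      * Additive.toMul (zmodHom m₂ g₂ h₂ x.toAdd.2)) (by
    intro a b
    have h1 : (a * b).toAdd.1 = a.toAdd.1 + b.toAdd.1 := rfl
    have h2 : (a * b).toAdd.2 = a.toAdd.2 + b.toAdd.2 := rfl
    have tm : ∀ u v : Additive H, Additive.toMul (u + v) = Additive.toMul u * Additive.toMul v :=
      fun _ _ => rfl
    simp only [h1, h2, map_add, tm]
    exact comm_assoc_helper _ _ _ _ (zmodHom_commute h₁ h₂ hc _ _))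

lemma pairHom_apply {H : Type*} [Group H] (m₁ m₂ : ℕ) (g₁ g₂ : H)
    (h₁ : g₁ ^ m₁ = 1) (h₂ : g₂ ^ m₂ = 1) (hc : Commute g₁ g₂)
    (x : ZMod m₁ × ZMod m₂) :
    pairHom m₁ m₂ g₁ g₂ h₁ h₂ hc (Multiplicative.ofAdd x)
      = Additive.toMul (zmodHom m₁ g₁ h₁ x.1) * Additive.toMul (zmodHom m₂ g₂ h₂ x.2) := rfl

lemma ofBijective_apply {M N : Type*} [Group M] [Group N] (f : M →* N)
    (hf : Function.Bijective f) (a : M) : MulEquiv.ofBijective f hf a = f a := rfl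

end GAux
namespace GAux
open Gen

/-- The target values of the generators under the abelianizing map. -/
def fgen (k p r : ℕ) : Gen k → Multiplicative (ZMod p × ZMod r)
  | Gen.c i => if (i : ℕ) = 1 then Multiplicative.ofAdd (1, 0) else 1
  | Gen.d i => if (i : ℕ) = 1 then Multiplicative.ofAdd (0, 1) else 1
  | _ => 1

lemma ofAdd_pow_p (p r : ℕ) :
    (Multiplicative.ofAdd ((1 : ZMod p), (0 : ZMod r))) ^ p = 1 := by
  rw [← ofAdd_nsmul]
  have : p • ((1 : ZMod p), (0 : ZMod r)) = (0, 0) := by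
    rw [Prod.smul_mk]
    simp [nsmul_eq_mul, ZMod.natCast_self]
  rw [this]
  rfl

lemma ofAdd_pow_r (p r : ℕ) :
    (Multiplicative.ofAdd ((0 : ZMod p), (1 : ZMod r))) ^ r = 1 := by
  rw [← ofAdd_nsmul]
  have : r • ((0 : ZMod p), (1 : ZMod r)) = (0, 0) := by
    rw [Prod.smul_mk]
    simp [nsmul_eq_mul, ZMod.natCast_self]
  rw [this]
  rfl

lemma fgen_rels (k n p r : ℕ) : ∀ x ∈ rels k n p r, FreeGroup.lift (fgen k p r) x = 1 := by
  have hc : ∀ a b : Multiplicative (ZMod p × ZMod r), ⁅a, b⁆ = 1 := fun a b =>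
    commutatorElement_eq_one_iff_commute.mpr (mul_comm a b)
  intro x hx
  simp only [rels, Set.mem_setOf_eq] at hx
  rcases hx with h|h|h|h|h|h|h|h|h|h|h|⟨i,hi,h⟩|⟨i,hi,h⟩|⟨i,hi,h⟩|⟨i,hi,h⟩
  · subst h; simp [A1, A2, B1, B2, Ct, Dt, fgen]
  · subst h; simp [A1, A2, B1, B2, Ct, Dt, fgen]
  · subst h; simp [A1, A2, B1, B2, Ct, Dt, fgen]
  · subst h; simp [B2, Dt, fgen, hc, map_commutatorElement]
  · subst h; simp [A1, B1, A2, Dt, fgen, hc, map_commutatorElement]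
  · subst h; simp [A1, B2, A2, Dt, fgen, hc, map_commutatorElement]
  · subst h; simp [A1, A2, Ct, Dt, fgen]
  · subst h; simp [A1, Ct, Dt, fgen, hc, map_commutatorElement]
  · subst h; simp [B1, Dt, fgen, hc, map_commutatorElement]
  · subst h; simp [A1, A2, B1, B2, fgen, hc, map_commutatorElement]
  · subst h
    simp [map_list_prod, List.map_ofFn, Function.comp_def, C, D, Ct, Dt, fgen, hc,
      map_commutatorElement, List.ofFn_const, List.prod_replicate]
  · rcases h with h|h|h|h|h|h|h|h <;> subst h <;>
      simp [A1, A2, B1, B2, C, D, fgen, hc, hi, map_commutatorElement, map_pow, one_pow]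
  · rcases h with h|h <;> subst h <;>
      simp [B2, C, D, fgen, hc, hi, map_commutatorElement, map_pow,
        ofAdd_pow_p, ofAdd_pow_r]
  · have hne : (i : ℕ) ≠ 1 := by omega
    rcases h with h|h <;> subst h <;>
      simp [B2, C, D, fgen, hc, hne, map_commutatorElement]
  · rcases h with h|h|h|h|h|h <;> subst h <;>
      simp [A1, A2, B1, B2, C, D, fgen, hc, map_commutatorElement]

end GAux

/-- algebraic core of Lemma 3.3: for `k ≥ 2`, `n ≥ 1`,
`p, r ≥ 0`, the group `G(k,n,p,r)` is isomorphic to `ℤ/p × ℤ/r`, via an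
isomorphism sending `c₂ ↦ (1,0)`, `d₂ ↦ (0,1)`, and all other generators to
the identity. -/
theorem G_iso_zmod_prod (k n p r : ℕ) (hk : 2 ≤ k) (hn : 1 ≤ n) :
    ∃ e : G k n p r ≃* Multiplicative (ZMod p × ZMod r),
      e (gen k n p r (Gen.c ⟨1, by omega⟩)) = Multiplicative.ofAdd (1, 0) ∧
      e (gen k n p r (Gen.d ⟨1, by omega⟩)) = Multiplicative.ofAdd (0, 1) ∧
      e (gen k n p r Gen.a1) = 1 ∧ e (gen k n p r Gen.b1) = 1 ∧
      e (gen k n p r Gen.a2) = 1 ∧ e (gen k n p r Gen.b2) = 1 ∧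
      e (gen k n p r Gen.ct) = 1 ∧ e (gen k n p r Gen.dt) = 1 ∧
      ∀ i : Fin k, (i : ℕ) ≠ 1 →
        e (gen k n p r (Gen.c i)) = 1 ∧ e (gen k n p r (Gen.d i)) = 1 := by
  obtain ⟨ha1, hb1, ha2, hb2, hct, hdt, hcd, hcp, hdr, hc2d2⟩ :=
    GAux.collapse (k := k) (n := n) (p := p) (r := r) hk
  have hk1 : 1 < k := by omega
  have hcp' : (PresentedGroup.of (Gen.c ⟨1, hk1⟩) : G k n p r) ^ p = 1 := hcp
  have hdr' : (PresentedGroup.of (Gen.d ⟨1, hk1⟩) : G k n p r) ^ r = 1 := hdr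
  have hc2d2' : Commute (PresentedGroup.of (Gen.c ⟨1, hk1⟩) : G k n p r)
      (PresentedGroup.of (Gen.d ⟨1, hk1⟩) : G k n p r) := hc2d2
  have hφ : ∀ x : Gen k,
      PresentedGroup.toGroup (GAux.fgen_rels k n p r) (PresentedGroup.of x)
        = GAux.fgen k p r x := fun x => PresentedGroup.toGroup.of _
  have hΨz : ∀ z w : ℤ,
      GAux.pairHom p r _ _ hcp' hdr' hc2d2'
          (Multiplicative.ofAdd (((z : ZMod p)), ((w : ZMod r))))
        = (PresentedGroup.of (Gen.c ⟨1, hk1⟩) : G k n p r) ^ z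
          * (PresentedGroup.of (Gen.d ⟨1, hk1⟩) : G k n p r) ^ w := by
    intro z w
    rw [GAux.pairHom_apply]
    rw [GAux.zmodHom_coe, GAux.zmodHom_coe]
  have hφc2 : PresentedGroup.toGroup (GAux.fgen_rels k n p r)
      (PresentedGroup.of (Gen.c ⟨1, hk1⟩))
        = Multiplicative.ofAdd ((1 : ZMod p), (0 : ZMod r)) := by
    rw [hφ]; simp [GAux.fgen]
  have hφd2 : PresentedGroup.toGroup (GAux.fgen_rels k n p r)
      (PresentedGroup.of (Gen.d ⟨1, hk1⟩))
        = Multiplicative.ofAdd ((0 : ZMod p), (1 : ZMod r)) := by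
    rw [hφ]; simp [GAux.fgen]
  -- Ψ ∘ φ = id
  have hcomp : (GAux.pairHom p r _ _ hcp' hdr' hc2d2').comp
      (PresentedGroup.toGroup (GAux.fgen_rels k n p r)) = MonoidHom.id (G k n p r) := by
    apply PresentedGroup.ext
    intro x
    simp only [MonoidHom.comp_apply, MonoidHom.id_apply]
    rw [hφ]
    cases x with
    | a1 => rw [show GAux.fgen k p r Gen.a1 = 1 from rfl, map_one]; exact ha1.symm
    | b1 => rw [show GAux.fgen k p r Gen.b1 = 1 from rfl, map_one]; exact hb1.symm
    | a2 => rw [show GAux.fgen k p r Gen.a2 = 1 from rfl, map_one]; exact ha2.symm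
    | b2 => rw [show GAux.fgen k p r Gen.b2 = 1 from rfl, map_one]; exact hb2.symm
    | ct => rw [show GAux.fgen k p r Gen.ct = 1 from rfl, map_one]; exact hct.symm
    | dt => rw [show GAux.fgen k p r Gen.dt = 1 from rfl, map_one]; exact hdt.symm
    | c i =>
      by_cases hi : (i : ℕ) = 1
      · have hii : i = ⟨1, hk1⟩ := Fin.ext hi
        subst hii
        rw [show GAux.fgen k p r (Gen.c (⟨1, hk1⟩ : Fin k))
          = Multiplicative.ofAdd ((1 : ZMod p), (0 : ZMod r)) from by simp [GAux.fgen]]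
        rw [show Multiplicative.ofAdd ((1 : ZMod p), (0 : ZMod r))
          = Multiplicative.ofAdd ((((1 : ℤ) : ZMod p)), (((0 : ℤ) : ZMod r))) from by norm_num]
        rw [hΨz 1 0]
        simp
      · rw [show GAux.fgen k p r (Gen.c i) = 1 from by simp [GAux.fgen, hi], map_one]
        exact ((hcd i hi).1).symm
    | d i =>
      by_cases hi : (i : ℕ) = 1
      · have hii : i = ⟨1, hk1⟩ := Fin.ext hi
        subst hii
        rw [show GAux.fgen k p r (Gen.d (⟨1, hk1⟩ : Fin k))
          = Multiplicative.ofAdd ((0 : ZMod p), (1 : ZMod r)) from by simp [GAux.fgen]]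
        rw [show Multiplicative.ofAdd ((0 : ZMod p), (1 : ZMod r))
          = Multiplicative.ofAdd ((((0 : ℤ) : ZMod p)), (((1 : ℤ) : ZMod r))) from by norm_num]
        rw [hΨz 0 1]
        simp
      · rw [show GAux.fgen k p r (Gen.d i) = 1 from by simp [GAux.fgen, hi], map_one]
        exact ((hcd i hi).2).symm
  have hΨφ : Function.LeftInverse (GAux.pairHom p r _ _ hcp' hdr' hc2d2')
      (PresentedGroup.toGroup (GAux.fgen_rels k n p r)) := by
    intro g
    have := DFunLike.congr_fun hcomp g
    simpa using this
  have hφΨ : Function.RightInverse (GAux.pairHom p r _ _ hcp' hdr' hc2d2')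
      (PresentedGroup.toGroup (GAux.fgen_rels k n p r)) := by
    intro m
    obtain ⟨z, hz⟩ := ZMod.intCast_surjective m.toAdd.1
    obtain ⟨w, hw⟩ := ZMod.intCast_surjective m.toAdd.2
    have hm : m = Multiplicative.ofAdd (((z : ZMod p)), ((w : ZMod r))) := by
      rw [hz, hw]
      rfl
    rw [hm, hΨz z w, map_mul, map_zpow, map_zpow, hφc2, hφd2]
    rw [← ofAdd_zsmul, ← ofAdd_zsmul, ← ofAdd_add]
    congr 1
    simp [Prod.ext_iff, zsmul_eq_mul]
  refine ⟨MulEquiv.ofBijective (PresentedGroup.toGroup (GAux.fgen_rels k n p r))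
    (show Function.Bijective _ from ⟨hΨφ.injective, hφΨ.surjective⟩), ?_, ?_, ?_, ?_, ?_, ?_, ?_, ?_, ?_⟩
  · rw [GAux.ofBijective_apply, hφ]; simp [GAux.fgen]
  · rw [GAux.ofBijective_apply, hφ]; simp [GAux.fgen]
  · rw [GAux.ofBijective_apply, hφ]; rfl
  · rw [GAux.ofBijective_apply, hφ]; rfl
  · rw [GAux.ofBijective_apply, hφ]; rfl
  · rw [GAux.ofBijective_apply, hφ]; rfl
  · rw [GAux.ofBijective_apply, hφ]; rfl
  · rw [GAux.ofBijective_apply, hφ]; rfl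
  · intro i hi
    constructor
    · rw [GAux.ofBijective_apply, hφ]; simp [GAux.fgen, hi]
    · rw [GAux.ofBijective_apply, hφ]; simp [GAux.fgen, hi]
end

section
/- For all integers k ≥ 2 and n ≥ 1, the group G(k,n,1,1) is trivial. (This is the assertion π₁(M_k^n) = 0 of Lemma 3.3 in its algebraic form.) -/
open scoped commutatorElement

section AuxCalc

/-- The core group-theoretic computation: from the listed relations (which are
consequences of the presentation of `G(k,n,1,1)`), all the main generators are
trivial. -/
private lemma main_calc {H : Type*} [Group H] (n : ℕ)
    (va vb va2 vb2 vt vs vc0 vd0 : H)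
    (h1 : va2 = vt⁻¹ * va * vt)
    (h2 : vb2 = vt⁻¹ * vb * vt)
    (h3 : vb = vt⁻¹ * vb2 * vt)
    (h4 : vb2 * vs = vs * vb2)
    (h5 : va⁻¹ * vb⁻¹ * va2 * vs = vs * (va⁻¹ * vb⁻¹ * va2))
    (h6 : va2⁻¹ * vb2⁻¹ * va * vs = vs * (va2⁻¹ * vb2⁻¹ * va))
    (h7 : vt⁻¹ * va * va2 * vt * va⁻¹ * va2⁻¹ = vs)
    (h8 : va * vs⁻¹ * va⁻¹ * vs = vt)
    (h9 : vb * vs = vs * vb)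
    (t1 : vb⁻¹ * vd0⁻¹ * vb * vd0 = va)
    (t2 : va⁻¹ * vd0 * va * vd0⁻¹ = vb)
    (t3 : vb2⁻¹ * vd0⁻¹ * vb2 * vd0 = vc0)
    (t4 : (vb2 * vc0⁻¹ * vb2⁻¹ * vc0) ^ n = vd0)
    (t5a : va * vc0 = vc0 * va)
    (t5b : vb * vc0 = vc0 * vb) :
    va = 1 ∧ vb = 1 ∧ va2 = 1 ∧ vb2 = 1 ∧ vt = 1 ∧ vs = 1 := by
  -- conjugation by dt⁻¹ sends a1 to ct⁻¹ * a1
  have s1 : vs⁻¹ * va * vs = vt⁻¹ * va := by rw [← h8]; group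
  have s1b : vs⁻¹ * vb * vs = vb := by rw [mul_assoc, h9]; group
  have s1c : vs⁻¹ * vb2 * vs = vb2 := by rw [mul_assoc, h4]; group
  have e5 : vs⁻¹ * (va⁻¹ * vb⁻¹ * va2) * vs = va⁻¹ * vb⁻¹ * va2 := by
    rw [mul_assoc, h5]; group
  -- conjugation by dt⁻¹ sends a2 to b1 * ct⁻¹ * b1⁻¹ * a2
  have s2 : vs⁻¹ * va2 * vs = vb * vt⁻¹ * vb⁻¹ * va2 := by
    have c : vs⁻¹ * va2 * vs
        = (vs⁻¹ * vb * vs) * (vs⁻¹ * va * vs) * (vs⁻¹ * (va⁻¹ * vb⁻¹ * va2) * vs) := by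
      group
    rw [c, s1b, s1, e5]; group
  have e6 : vs⁻¹ * (va2⁻¹ * vb2⁻¹ * va) * vs = va2⁻¹ * vb2⁻¹ * va := by
    rw [mul_assoc, h6]; group
  have e6'' : va2⁻¹ * vb * vt * vb⁻¹ * vb2⁻¹ * vt⁻¹ * va = va2⁻¹ * vb2⁻¹ * va := by
    have c : va2⁻¹ * vb * vt * vb⁻¹ * vb2⁻¹ * vt⁻¹ * va
        = (vs⁻¹ * va2 * vs)⁻¹ * (vs⁻¹ * vb2 * vs)⁻¹ * (vs⁻¹ * va * vs) := by
      rw [s2, s1c, s1]; group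
    have c2 : (vs⁻¹ * va2 * vs)⁻¹ * (vs⁻¹ * vb2 * vs)⁻¹ * (vs⁻¹ * va * vs)
        = vs⁻¹ * (va2⁻¹ * vb2⁻¹ * va) * vs := by group
    rw [c, c2, e6]
  have e6' : vb * vt * vb⁻¹ * vb2⁻¹ * vt⁻¹ = vb2⁻¹ := by
    calc vb * vt * vb⁻¹ * vb2⁻¹ * vt⁻¹
        = va2 * (va2⁻¹ * vb * vt * vb⁻¹ * vb2⁻¹ * vt⁻¹ * va) * va⁻¹ := by group
      _ = va2 * (va2⁻¹ * vb2⁻¹ * va) * va⁻¹ := by rw [e6'']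
      _ = vb2⁻¹ := by group
  -- ct commutes with b1⁻¹ * b2⁻¹
  have s3 : vt * vb⁻¹ * vb2⁻¹ * vt⁻¹ = vb⁻¹ * vb2⁻¹ := by
    calc vt * vb⁻¹ * vb2⁻¹ * vt⁻¹ = vb⁻¹ * (vb * vt * vb⁻¹ * vb2⁻¹ * vt⁻¹) := by group
      _ = vb⁻¹ * vb2⁻¹ := by rw [e6']
  have s4 : vt * vb * vt⁻¹ = vb2 := by rw [h3]; group
  have s5 : vt * vb2 * vt⁻¹ = vb := by rw [h2]; group
  -- b1 and b2 commute
  have s6 : vb * vb2 = vb2 * vb := by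
    have e : vb2⁻¹ * vb⁻¹ = vb⁻¹ * vb2⁻¹ := by
      calc vb2⁻¹ * vb⁻¹ = (vt * vb * vt⁻¹)⁻¹ * (vt * vb2 * vt⁻¹)⁻¹ := by rw [s4, s5]
        _ = vt * vb⁻¹ * vb2⁻¹ * vt⁻¹ := by group
        _ = vb⁻¹ * vb2⁻¹ := s3
    calc vb * vb2 = (vb2⁻¹ * vb⁻¹)⁻¹ := by group
      _ = (vb⁻¹ * vb2⁻¹)⁻¹ := by rw [e]
      _ = vb2 * vb := by group
  -- conjugation by d1⁻¹ sends b1 to b1*a1 and b2 to b2*c1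
  have s7 : vd0⁻¹ * vb * vd0 = vb * va := by rw [← t1]; group
  have s8 : vd0⁻¹ * vb2 * vd0 = vb2 * vc0 := by rw [← t3]; group
  -- a1 and b2 commute
  have s9 : va * vb2 = vb2 * va := by
    have e1 : vb * va * (vb2 * vc0) = vb2 * vc0 * (vb * va) := by
      rw [← s7, ← s8]
      calc vd0⁻¹ * vb * vd0 * (vd0⁻¹ * vb2 * vd0) = vd0⁻¹ * (vb * vb2) * vd0 := by group
        _ = vd0⁻¹ * (vb2 * vb) * vd0 := by rw [s6]
        _ = vd0⁻¹ * vb2 * vd0 * (vd0⁻¹ * vb * vd0) := by group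
    have e2 : vb * (va * vb2) * vc0 = vb * (vb2 * va) * vc0 := by
      calc vb * (va * vb2) * vc0 = vb * va * (vb2 * vc0) := by group
        _ = vb2 * vc0 * (vb * va) := e1
        _ = vb2 * (vc0 * vb) * va := by group
        _ = vb2 * (vb * vc0) * va := by rw [← t5b]
        _ = vb2 * vb * (vc0 * va) := by group
        _ = vb2 * vb * (va * vc0) := by rw [← t5a]
        _ = vb * vb2 * (va * vc0) := by rw [← s6]
        _ = vb * (vb2 * va) * vc0 := by group
    exact mul_left_cancel (mul_right_cancel e2)
  have h4' : vb2 * vs⁻¹ = vs⁻¹ * vb2 := by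
    calc vb2 * vs⁻¹ = vs⁻¹ * (vs * vb2) * vs⁻¹ := by group
      _ = vs⁻¹ * (vb2 * vs) * vs⁻¹ := by rw [← h4]
      _ = vs⁻¹ * vb2 := by group
  have s9' : vb2 * va⁻¹ = va⁻¹ * vb2 := by
    calc vb2 * va⁻¹ = va⁻¹ * (va * vb2) * va⁻¹ := by group
      _ = va⁻¹ * (vb2 * va) * va⁻¹ := by rw [s9]
      _ = va⁻¹ * vb2 := by group
  -- b2 and ct commute
  have s10 : vb2 * vt = vt * vb2 := by
    calc vb2 * vt = vb2 * (va * vs⁻¹ * va⁻¹ * vs) := by rw [h8]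
      _ = vb2 * va * vs⁻¹ * va⁻¹ * vs := by group
      _ = va * vb2 * vs⁻¹ * va⁻¹ * vs := by rw [← s9]
      _ = va * (vb2 * vs⁻¹) * va⁻¹ * vs := by group
      _ = va * (vs⁻¹ * vb2) * va⁻¹ * vs := by rw [h4']
      _ = va * vs⁻¹ * (vb2 * va⁻¹) * vs := by group
      _ = va * vs⁻¹ * (va⁻¹ * vb2) * vs := by rw [s9']
      _ = va * vs⁻¹ * va⁻¹ * (vb2 * vs) := by group
      _ = va * vs⁻¹ * va⁻¹ * (vs * vb2) := by rw [h4]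
      _ = va * vs⁻¹ * va⁻¹ * vs * vb2 := by group
      _ = vt * vb2 := by rw [h8]
  -- hence b1 = b2
  have s11 : vb2 = vb := by
    have e : vb2 * vt = vb * vt := by
      calc vb2 * vt = vt * vb2 := s10
        _ = vt * (vt⁻¹ * vb * vt) := by rw [← h2]
        _ = vb * vt := by group
    exact mul_right_cancel e
  -- a1 and b1 commute
  have s12 : va * vb = vb * va := by rw [← s11]; exact s9
  -- c1 = a1
  have s13 : vc0 = va := by rw [← t1, ← t3, s11]
  -- d1 = 1
  have s14 : vd0 = 1 := by
    have e : vb * va⁻¹ * vb⁻¹ * va = 1 := by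
      have e' : vb * va⁻¹ = va⁻¹ * vb := by
        calc vb * va⁻¹ = va⁻¹ * (va * vb) * va⁻¹ := by group
          _ = va⁻¹ * (vb * va) * va⁻¹ := by rw [s12]
          _ = va⁻¹ * vb := by group
      rw [e']; group
    rw [← t4, s11, s13, e, one_pow]
  have s15 : va = 1 := by rw [← t1, s14]; group
  have s16 : vb = 1 := by rw [← t2, s14, s15]; group
  have s17 : vb2 = 1 := s11.trans s16
  have s18 : va2 = 1 := by rw [h1, s15]; group
  have s19 : vs = 1 := by rw [← h7, s15, s18]; group
  have s20 : vt = 1 := by rw [← h8, s15, s19]; group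
  exact ⟨s15, s16, s18, s17, s20, s19⟩

end AuxCalc

/-- Lemma 3.3, triviality assertion: for `k ≥ 2` and
`n ≥ 1`, the group `G(k,n,1,1)` is trivial. -/
theorem G_one_one_trivial (k n : ℕ) (hk : 2 ≤ k) (hn : 1 ≤ n) :
    ∀ x : G k n 1 1, x = 1 := by
  have hk0 : 0 < k := by omega
  have relone : ∀ w : FreeGroup (Gen k), w ∈ rels k n 1 1 →
      (PresentedGroup.mk (rels k n 1 1)) w = 1 := fun w hw => by
    exact (QuotientGroup.eq_one_iff w).mpr (Subgroup.subset_normalClosure hw)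
  -- extract the relations needed for the main computation
  have h1 := relone _ (by
      simp only [rels, Set.mem_setOf_eq]
      exact Or.inl rfl)
  have h2 := relone _ (by
      simp only [rels, Set.mem_setOf_eq]
      exact Or.inr <| Or.inl rfl)
  have h3 := relone _ (by
      simp only [rels, Set.mem_setOf_eq]
      exact Or.inr <| Or.inr <| Or.inl rfl)
  have h4 := relone _ (by
      simp only [rels, Set.mem_setOf_eq]
      exact Or.inr <| Or.inr <| Or.inr <| Or.inl rfl)
  have h5 := relone _ (by
      simp only [rels, Set.mem_setOf_eq]
      exact Or.inr <| Or.inr <| Or.inr <| Or.inr <| Or.inl rfl)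
  have h6 := relone _ (by
      simp only [rels, Set.mem_setOf_eq]
      exact Or.inr <| Or.inr <| Or.inr <| Or.inr <| Or.inr <| Or.inl rfl)
  have h7 := relone _ (by
      simp only [rels, Set.mem_setOf_eq]
      exact Or.inr <| Or.inr <| Or.inr <| Or.inr <| Or.inr <| Or.inr <| Or.inl rfl)
  have h8 := relone _ (by
      simp only [rels, Set.mem_setOf_eq]
      exact Or.inr <| Or.inr <| Or.inr <| Or.inr <| Or.inr <| Or.inr <| Or.inr <| Or.inl rfl)
  have h9 := relone _ (by
      simp only [rels, Set.mem_setOf_eq]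
      exact Or.inr <| Or.inr <| Or.inr <| Or.inr <| Or.inr <| Or.inr <| Or.inr <| Or.inr <|
        Or.inl rfl)
  have t1 := relone _ (by
      simp only [rels, Set.mem_setOf_eq]
      exact Or.inr <| Or.inr <| Or.inr <| Or.inr <| Or.inr <| Or.inr <| Or.inr <| Or.inr <|
        Or.inr <| Or.inr <| Or.inr <| Or.inl ⟨⟨0, hk0⟩, rfl, Or.inl rfl⟩)
  have t2 := relone _ (by
      simp only [rels, Set.mem_setOf_eq]
      exact Or.inr <| Or.inr <| Or.inr <| Or.inr <| Or.inr <| Or.inr <| Or.inr <| Or.inr <|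
        Or.inr <| Or.inr <| Or.inr <| Or.inl ⟨⟨0, hk0⟩, rfl, Or.inr <| Or.inl rfl⟩)
  have t3 := relone _ (by
      simp only [rels, Set.mem_setOf_eq]
      exact Or.inr <| Or.inr <| Or.inr <| Or.inr <| Or.inr <| Or.inr <| Or.inr <| Or.inr <|
        Or.inr <| Or.inr <| Or.inr <| Or.inl ⟨⟨0, hk0⟩, rfl, Or.inr <| Or.inr <| Or.inl rfl⟩)
  have t4 := relone _ (by
      simp only [rels, Set.mem_setOf_eq]
      exact Or.inr <| Or.inr <| Or.inr <| Or.inr <| Or.inr <| Or.inr <| Or.inr <| Or.inr <|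
        Or.inr <| Or.inr <| Or.inr <| Or.inl ⟨⟨0, hk0⟩, rfl,
        Or.inr <| Or.inr <| Or.inr <| Or.inl rfl⟩)
  have t5a := relone _ (by
      simp only [rels, Set.mem_setOf_eq]
      exact Or.inr <| Or.inr <| Or.inr <| Or.inr <| Or.inr <| Or.inr <| Or.inr <| Or.inr <|
        Or.inr <| Or.inr <| Or.inr <| Or.inl ⟨⟨0, hk0⟩, rfl,
        Or.inr <| Or.inr <| Or.inr <| Or.inr <| Or.inl rfl⟩)
  have t5b := relone _ (by
      simp only [rels, Set.mem_setOf_eq]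
      exact Or.inr <| Or.inr <| Or.inr <| Or.inr <| Or.inr <| Or.inr <| Or.inr <| Or.inr <|
        Or.inr <| Or.inr <| Or.inr <| Or.inl ⟨⟨0, hk0⟩, rfl,
        Or.inr <| Or.inr <| Or.inr <| Or.inr <| Or.inr <| Or.inl rfl⟩)
  -- bring the relations into equational form
  simp only [Gen.A1, Gen.B1, Gen.A2, Gen.B2, Gen.Ct, Gen.Dt, Gen.C, Gen.D,
    map_commutatorElement, map_mul, map_inv,
    commutatorElement_eq_one_iff_mul_comm] at h4 h5 h6 h9 t5a t5b
  simp only [Gen.A1, Gen.B1, Gen.A2, Gen.B2, Gen.Ct, Gen.Dt, Gen.C, Gen.D,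
    map_commutatorElement, map_mul, map_inv, map_pow,
    commutatorElement_def, inv_inv] at h1 h2 h3 h7 h8 t1 t2 t3 t4
  rw [mul_inv_eq_one] at h1 h2 h3 h7 h8 t1 t2 t3 t4
  -- the main computation
  obtain ⟨ea, eb, ea2, eb2, et, es⟩ :=
    main_calc n _ _ _ _ _ _ _ _ h1 h2 h3 h4 h5 h6 h7 h8 h9 t1 t2 t3 t4 t5a t5b
  -- the surgery generators `c i`, `d i` all die as well
  have hcd : ∀ i : Fin k,
      (PresentedGroup.mk (rels k n 1 1)) (FreeGroup.of (Gen.c i)) = 1 ∧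
      (PresentedGroup.mk (rels k n 1 1)) (FreeGroup.of (Gen.d i)) = 1 := by
    intro i
    rcases Nat.lt_or_ge (i : ℕ) 1 with hv | hv
    · have h0 : (i : ℕ) = 0 := by omega
      have m3 := relone _ (by
      simp only [rels, Set.mem_setOf_eq]
      exact Or.inr <| Or.inr <| Or.inr <| Or.inr <| Or.inr <| Or.inr <| Or.inr <| Or.inr <|
        Or.inr <| Or.inr <| Or.inr <| Or.inl ⟨i, h0, Or.inr <| Or.inr <| Or.inl rfl⟩)
      have m4 := relone _ (by
      simp only [rels, Set.mem_setOf_eq]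
      exact Or.inr <| Or.inr <| Or.inr <| Or.inr <| Or.inr <| Or.inr <| Or.inr <| Or.inr <|
        Or.inr <| Or.inr <| Or.inr <| Or.inl ⟨i, h0,
        Or.inr <| Or.inr <| Or.inr <| Or.inl rfl⟩)
      simp only [Gen.B2, Gen.C, Gen.D, map_commutatorElement, map_mul, map_inv, map_pow,
        commutatorElement_def, inv_inv] at m3 m4
      rw [mul_inv_eq_one] at m3 m4
      have hc : (PresentedGroup.mk (rels k n 1 1)) (FreeGroup.of (Gen.c i)) = 1 := by
        rw [← m3, eb2]; group
      refine ⟨hc, ?_⟩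
      rw [← m4, eb2, hc]
      simp
    · rcases Nat.lt_or_ge (i : ℕ) 2 with hv2 | hv2
      · have h1' : (i : ℕ) = 1 := by omega
        have m3 := relone _ (by
      simp only [rels, Set.mem_setOf_eq]
      exact Or.inr <| Or.inr <| Or.inr <| Or.inr <| Or.inr <| Or.inr <| Or.inr <| Or.inr <|
        Or.inr <| Or.inr <| Or.inr <| Or.inr <| Or.inl ⟨i, h1', Or.inl rfl⟩)
        have m4 := relone _ (by
      simp only [rels, Set.mem_setOf_eq]
      exact Or.inr <| Or.inr <| Or.inr <| Or.inr <| Or.inr <| Or.inr <| Or.inr <| Or.inr <|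
        Or.inr <| Or.inr <| Or.inr <| Or.inr <| Or.inl ⟨i, h1', Or.inr rfl⟩)
        simp only [Gen.B2, Gen.C, Gen.D, map_commutatorElement, map_mul, map_inv, map_pow,
          commutatorElement_def, inv_inv, pow_one] at m3 m4
        rw [mul_inv_eq_one] at m3 m4
        have hc : (PresentedGroup.mk (rels k n 1 1)) (FreeGroup.of (Gen.c i)) = 1 := by
          rw [← m3, eb2]; group
        refine ⟨hc, ?_⟩
        rw [← m4, eb2, hc]; group
      · have m3 := relone _ (by
      simp only [rels, Set.mem_setOf_eq]
      exact Or.inr <| Or.inr <| Or.inr <| Or.inr <| Or.inr <| Or.inr <| Or.inr <| Or.inr <|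
        Or.inr <| Or.inr <| Or.inr <| Or.inr <| Or.inr <| Or.inl ⟨i, hv2, Or.inl rfl⟩)
        have m4 := relone _ (by
      simp only [rels, Set.mem_setOf_eq]
      exact Or.inr <| Or.inr <| Or.inr <| Or.inr <| Or.inr <| Or.inr <| Or.inr <| Or.inr <|
        Or.inr <| Or.inr <| Or.inr <| Or.inr <| Or.inr <| Or.inl ⟨i, hv2, Or.inr rfl⟩)
        simp only [Gen.B2, Gen.C, Gen.D, map_commutatorElement, map_mul, map_inv, map_pow,
          commutatorElement_def, inv_inv] at m3 m4
        rw [mul_inv_eq_one] at m3 m4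
        have hc : (PresentedGroup.mk (rels k n 1 1)) (FreeGroup.of (Gen.c i)) = 1 := by
          rw [← m3, eb2]; group
        refine ⟨hc, ?_⟩
        rw [← m4, eb2, hc]; group
  -- every generator is trivial, hence the group is trivial
  have key : ∀ g0 : Gen k, (PresentedGroup.of (rels := rels k n 1 1) g0) = 1 := by
    intro g0
    cases g0 with
    | a1 => exact ea
    | b1 => exact eb
    | a2 => exact ea2
    | b2 => exact eb2
    | ct => exact et
    | dt => exact es
    | c i => exact (hcd i).1
    | d i => exact (hcd i).2
  intro x
  have hxbot := PresentedGroup.generated_by (rels k n 1 1) ⊥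
    (fun j => Subgroup.mem_bot.mpr (key j)) x
  exact Subgroup.mem_bot.mp hxbot
end

section
/- For all integers k ≥ 2, n ≥ 1, p ≥ 0, r ≥ 0, the images of the generators b₁ and b₂ commute in G(k,n,p,r), i.e. [b₁,b₂] = 1 holds in G(k,n,p,r). (First step in the proof of Lemma 3.3.) -/
open scoped commutatorElement

private lemma key {H : Type*} [Group H] (a1 b1 a2 b2 ct dt : H)
    (h1 : b2 = ct⁻¹ * b1 * ct) (h2 : b1 = ct⁻¹ * b2 * ct)
    (h3 : Commute b2 dt) (h9 : Commute b1 dt)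
    (h4 : Commute (a1⁻¹ * b1⁻¹ * a2) dt) (h5 : Commute (a2⁻¹ * b2⁻¹ * a1) dt)
    (h6 : a1 * dt⁻¹ * a1⁻¹ * dt = ct) :
    Commute b1 b2 := by
  have hq : Commute (a1⁻¹ * (b1⁻¹ * b2⁻¹) * a1) dt := by
    have := h4.mul_left h5
    have e : (a1⁻¹ * b1⁻¹ * a2) * (a2⁻¹ * b2⁻¹ * a1) = a1⁻¹ * (b1⁻¹ * b2⁻¹) * a1 := by
      group
    rwa [e] at this
  have hw : Commute (b1⁻¹ * b2⁻¹) (a1 * dt * a1⁻¹) := by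
    have h := congrArg (fun x => a1 * x * a1⁻¹) hq.eq
    simp only [mul_assoc, inv_mul_cancel_left, mul_inv_cancel_left,
      mul_inv_cancel, mul_one] at h
    show (b1⁻¹ * b2⁻¹) * (a1 * dt * a1⁻¹) = (a1 * dt * a1⁻¹) * (b1⁻¹ * b2⁻¹)
    simp only [mul_assoc] at h ⊢
    exact h
  have hwdt : Commute (b1⁻¹ * b2⁻¹) dt := h9.inv_left.mul_left h3.inv_left
  have hct : Commute (b1⁻¹ * b2⁻¹) ct := by
    have := hw.inv_right.mul_right hwdt
    have e : (a1 * dt * a1⁻¹)⁻¹ * dt = ct := by rw [← h6]; group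
    rwa [e] at this
  have hcc : Commute (b2 * b1) ct := by
    have := hct.inv_left
    rwa [mul_inv_rev, inv_inv, inv_inv] at this
  have key2 : b2 * b1 = b1 * b2 := by
    calc b2 * b1 = ct⁻¹ * ((b2 * b1) * ct) := by rw [hcc.eq]; group
    _ = (ct⁻¹ * b2 * ct) * (ct⁻¹ * b1 * ct) := by group
    _ = b1 * b2 := by rw [← h2, ← h1]
  exact key2.symm

/-- first step of the proof of Lemma 3.3: the images of
`b₁` and `b₂` commute in `G(k,n,p,r)`. -/
theorem b1_b2_commute (k n p r : ℕ) (hk : 2 ≤ k) (hn : 1 ≤ n) :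
    ⁅gen k n p r Gen.b1, gen k n p r Gen.b2⁆ = 1 := by
  set π : FreeGroup (Gen k) →* G k n p r :=
    QuotientGroup.mk' (Subgroup.normalClosure (rels k n p r)) with hπ
  have hrel : ∀ w ∈ rels k n p r, π w = 1 := fun w hw =>
    (QuotientGroup.eq_one_iff w).mpr (Subgroup.subset_normalClosure hw)
  have hgen : ∀ g : Gen k, π (FreeGroup.of g) = gen k n p r g := fun g => rfl
  set b1 := gen k n p r Gen.b1
  set b2 := gen k n p r Gen.b2
  set a1 := gen k n p r Gen.a1
  set a2 := gen k n p r Gen.a2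
  set ct := gen k n p r Gen.ct
  set dt := gen k n p r Gen.dt
  have h1 : b2 = ct⁻¹ * b1 * ct := by
    have := hrel _ (Or.inr (Or.inl rfl))
    simp only [Gen.B2, Gen.B1, Gen.Ct, map_mul, map_inv, hgen] at this
    rw [mul_inv_eq_one] at this
    simpa using this
  have h2 : b1 = ct⁻¹ * b2 * ct := by
    have := hrel _ (Or.inr (Or.inr (Or.inl rfl)))
    simp only [Gen.B2, Gen.B1, Gen.Ct, map_mul, map_inv, hgen] at this
    rw [mul_inv_eq_one] at this
    simpa using this
  have h3 : Commute b2 dt := by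
    have := hrel _ (Or.inr (Or.inr (Or.inr (Or.inl rfl))))
    simp only [map_commutatorElement, Gen.B2, Gen.Dt, hgen] at this
    exact commutatorElement_eq_one_iff_commute.mp this
  have h4 : Commute (a1⁻¹ * b1⁻¹ * a2) dt := by
    have := hrel _ (Or.inr (Or.inr (Or.inr (Or.inr (Or.inl rfl)))))
    simp only [map_commutatorElement, Gen.A1, Gen.B1, Gen.A2, Gen.Dt,
      map_mul, map_inv, hgen] at this
    exact commutatorElement_eq_one_iff_commute.mp this
  have h5 : Commute (a2⁻¹ * b2⁻¹ * a1) dt := by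
    have := hrel _ (Or.inr (Or.inr (Or.inr (Or.inr (Or.inr (Or.inl rfl))))))
    simp only [map_commutatorElement, Gen.A1, Gen.B2, Gen.A2, Gen.Dt,
      map_mul, map_inv, hgen] at this
    exact commutatorElement_eq_one_iff_commute.mp this
  have h6 : a1 * dt⁻¹ * a1⁻¹ * dt = ct := by
    have := hrel _
      (Or.inr (Or.inr (Or.inr (Or.inr (Or.inr (Or.inr (Or.inr (Or.inl rfl))))))))
    simp only [map_mul, map_inv, map_commutatorElement, Gen.A1, Gen.Ct, Gen.Dt,
      hgen] at this
    rw [mul_inv_eq_one] at this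
    have h : ⁅a1, dt⁻¹⁆ = ct := this
    rw [← h]
    group
  have h9 : Commute b1 dt := by
    have := hrel _
      (Or.inr (Or.inr (Or.inr (Or.inr (Or.inr (Or.inr (Or.inr (Or.inr (Or.inl rfl)))))))))
    simp only [map_commutatorElement, Gen.B1, Gen.Dt, hgen] at this
    exact commutatorElement_eq_one_iff_commute.mp this
  exact commutatorElement_eq_one_iff_commute.mpr
    (key a1 b1 a2 b2 ct dt h1 h2 h3 h9 h4 h5 h6)
end

section
/- For all integers k ≥ 2, n ≥ 1, p ≥ 0, r ≥ 0, the image of the generator a₁ is the identity element of G(k,n,p,r). (Key step in the proof of Lemma 3.3.) -/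
open scoped commutatorElement

/-- key step of the proof of Lemma 3.3: the image of `a₁`
is trivial in `G(k,n,p,r)`. -/
theorem a1_trivial (k n p r : ℕ) (hk : 2 ≤ k) (hn : 1 ≤ n) :
    gen k n p r Gen.a1 = 1 := by
  have hk0 : 0 < k := by omega
  set π := PresentedGroup.mk (rels k n p r) with hπdef
  have key : ∀ w ∈ rels k n p r, π w = 1 := fun w hw =>
    (QuotientGroup.eq_one_iff w).mpr (Subgroup.subset_normalClosure hw)
  -- extract the relators we need
  have h2 := key _ (show (Gen.B2 k * ((Gen.Ct k)⁻¹ * Gen.B1 k * Gen.Ct k)⁻¹) ∈ rels k n p r from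
    Or.inr (Or.inl rfl))
  have h3 := key _ (show (Gen.B1 k * ((Gen.Ct k)⁻¹ * Gen.B2 k * Gen.Ct k)⁻¹) ∈ rels k n p r from
    Or.inr (Or.inr (Or.inl rfl)))
  have h4 := key _ (show (⁅Gen.B2 k, Gen.Dt k⁆) ∈ rels k n p r from
    Or.inr (Or.inr (Or.inr (Or.inl rfl))))
  have h5 := key _ (show (⁅(Gen.A1 k)⁻¹ * (Gen.B1 k)⁻¹ * Gen.A2 k, Gen.Dt k⁆) ∈ rels k n p r from
    Or.inr (Or.inr (Or.inr (Or.inr (Or.inl rfl)))))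
  have h6 := key _ (show (⁅(Gen.A2 k)⁻¹ * (Gen.B2 k)⁻¹ * Gen.A1 k, Gen.Dt k⁆) ∈ rels k n p r from
    Or.inr (Or.inr (Or.inr (Or.inr (Or.inr (Or.inl rfl))))))
  have h8 := key _ (show (⁅Gen.A1 k, (Gen.Dt k)⁻¹⁆ * (Gen.Ct k)⁻¹) ∈ rels k n p r from
    Or.inr (Or.inr (Or.inr (Or.inr (Or.inr (Or.inr (Or.inr (Or.inl rfl))))))))
  have h9 := key _ (show (⁅Gen.B1 k, Gen.Dt k⁆) ∈ rels k n p r from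
    Or.inr (Or.inr (Or.inr (Or.inr (Or.inr (Or.inr (Or.inr (Or.inr (Or.inl rfl)))))))))
  have h12a := key _ (show (⁅(Gen.B1 k)⁻¹, (Gen.D k ⟨0, hk0⟩)⁻¹⁆ * (Gen.A1 k)⁻¹) ∈ rels k n p r from
    Or.inr (Or.inr (Or.inr (Or.inr (Or.inr (Or.inr (Or.inr (Or.inr (Or.inr (Or.inr (Or.inr
      (Or.inl ⟨⟨0, hk0⟩, rfl, Or.inl rfl⟩))))))))))))
  have h12d := key _ (show (⁅Gen.B2 k, (Gen.C k ⟨0, hk0⟩)⁻¹⁆ ^ n * (Gen.D k ⟨0, hk0⟩)⁻¹)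
      ∈ rels k n p r from
    Or.inr (Or.inr (Or.inr (Or.inr (Or.inr (Or.inr (Or.inr (Or.inr (Or.inr (Or.inr (Or.inr
      (Or.inl ⟨⟨0, hk0⟩, rfl, Or.inr (Or.inr (Or.inr (Or.inl rfl)))⟩))))))))))))
  have h12c := key _ (show (⁅Gen.B1 k, Gen.C k ⟨0, hk0⟩⁆) ∈ rels k n p r from
    Or.inr (Or.inr (Or.inr (Or.inr (Or.inr (Or.inr (Or.inr (Or.inr (Or.inr (Or.inr (Or.inr
      (Or.inl ⟨⟨0, hk0⟩, rfl, Or.inr (Or.inr (Or.inr (Or.inr (Or.inr (Or.inl rfl)))))⟩))))))))))))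
  simp only [map_mul, map_inv, map_pow, map_commutatorElement] at h2 h3 h4 h5 h6 h8 h9 h12a h12d h12c
  set A := π (Gen.A1 k) with hAdef
  set B := π (Gen.B1 k) with hBdef
  set A' := π (Gen.A2 k) with hA'def
  set B' := π (Gen.B2 k) with hB'def
  set X := π (Gen.Ct k) with hXdef
  set Y := π (Gen.Dt k) with hYdef
  set cc := π (Gen.C k ⟨0, hk0⟩) with hccdef
  set dd := π (Gen.D k ⟨0, hk0⟩) with hdddef
  -- reformulate the relations
  have hq2 : B' = X⁻¹ * B * X := mul_inv_eq_one.mp h2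
  have hq3 : B = X⁻¹ * B' * X := mul_inv_eq_one.mp h3
  have h4c : B' * Y = Y * B' := commutatorElement_eq_one_iff_mul_comm.mp h4
  have h5c : A⁻¹ * B⁻¹ * A' * Y = Y * (A⁻¹ * B⁻¹ * A') := commutatorElement_eq_one_iff_mul_comm.mp h5
  have h6c : A'⁻¹ * B'⁻¹ * A * Y = Y * (A'⁻¹ * B'⁻¹ * A) := commutatorElement_eq_one_iff_mul_comm.mp h6
  have hX : ⁅A, Y⁻¹⁆ = X := mul_inv_eq_one.mp h8
  have h9c : B * Y = Y * B := commutatorElement_eq_one_iff_mul_comm.mp h9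
  have ha : ⁅B⁻¹, dd⁻¹⁆ = A := mul_inv_eq_one.mp h12a
  have hd : ⁅B', cc⁻¹⁆ ^ n = dd := mul_inv_eq_one.mp h12d
  have hBc : B * cc = cc * B := commutatorElement_eq_one_iff_mul_comm.mp h12c
  have hXe : X = A * Y⁻¹ * A⁻¹ * Y := by
    rw [← hX, commutatorElement_def]; group
  -- conjugation formulas by Y
  have c9 : Y⁻¹ * (B * Y) = B := by rw [h9c]; group
  have c4 : Y⁻¹ * (B' * Y) = B' := by rw [h4c]; group
  have c1 : Y⁻¹ * (A * Y) = X⁻¹ * A := by rw [hXe]; group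
  have c5 : Y⁻¹ * (A⁻¹ * B⁻¹ * A' * Y) = A⁻¹ * B⁻¹ * A' := by rw [h5c]; group
  have c6 : Y⁻¹ * (A'⁻¹ * B'⁻¹ * A * Y) = A'⁻¹ * B'⁻¹ * A := by rw [h6c]; group
  have hYA' : Y⁻¹ * (A' * Y) = B * X⁻¹ * B⁻¹ * A' := by
    have e : Y⁻¹ * (A' * Y)
        = (Y⁻¹ * (B * Y)) * (Y⁻¹ * (A * Y)) * (Y⁻¹ * (A⁻¹ * B⁻¹ * A' * Y)) := by group
    rw [e, c9, c1, c5]; group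
  have hYA'2 : Y⁻¹ * (A' * Y) = B'⁻¹ * X⁻¹ * B' * A' := by
    have e : Y⁻¹ * (A' * Y)
        = (Y⁻¹ * (B' * Y))⁻¹ * (Y⁻¹ * (A * Y)) * (Y⁻¹ * (A'⁻¹ * B'⁻¹ * A * Y))⁻¹ := by group
    rw [e, c4, c1, c6]; group
  have hBXB : B * X⁻¹ * B⁻¹ = B'⁻¹ * X⁻¹ * B' := mul_right_cancel (hYA'.symm.trans hYA'2)
  have hcommXinv : B' * B * X⁻¹ = X⁻¹ * (B' * B) := by
    calc B' * B * X⁻¹ = B' * (B * X⁻¹ * B⁻¹) * B := by group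
      _ = B' * (B'⁻¹ * X⁻¹ * B') * B := by rw [hBXB]
      _ = X⁻¹ * (B' * B) := by group
  have hcommX : X * (B' * B) = B' * B * X := by
    calc X * (B' * B) = X * (B' * B * X⁻¹) * X := by group
      _ = X * (X⁻¹ * (B' * B)) * X := by rw [hcommXinv]
      _ = B' * B * X := by group
  have hq3' : B' = X * B * X⁻¹ := by rw [hq3]; group
  have hE : X⁻¹ * B * X = X * B * X⁻¹ := hq2.symm.trans hq3'
  have hst : X * B * X * B = B * X * B * X := by
    have h := hcommX
    rw [hq2] at h
    calc X * B * X * B = X * (X * (X⁻¹ * B * X * B)) := by group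
      _ = X * (X⁻¹ * B * X * B * X) := by rw [h]
      _ = B * X * B * X := by group
  have hBB' : B * B' = B' * B := by
    rw [hq2]
    calc B * (X⁻¹ * B * X) = X⁻¹ * (X * B * X⁻¹) * (B * X) := by group
      _ = X⁻¹ * (X⁻¹ * B * X) * (B * X) := by rw [← hE]
      _ = X⁻¹ * X⁻¹ * (B * X * B * X) := by group
      _ = X⁻¹ * X⁻¹ * (X * B * X * B) := by rw [← hst]
      _ = X⁻¹ * B * X * B := by group
  have hcommB'B : Commute B B' := hBB'
  have hcommBc : Commute B cc := hBc
  have hcommBd : Commute B dd := by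
    rw [← hd]
    have h1 : Commute B ⁅B', cc⁻¹⁆ := by
      rw [commutatorElement_def]
      exact ((hcommB'B.mul_right hcommBc.inv_right).mul_right
        hcommB'B.inv_right).mul_right hcommBc.inv_right.inv_right
    exact h1.pow_right n
  show A = 1
  rw [← ha]
  exact commutatorElement_eq_one_iff_commute.mpr hcommBd.inv_left.inv_right
end

section
/- For all integers k ≥ 2 and n ≥ 1, the group H(k,n) — defined by the same generators and the same relations as G(k,n,1,1) but with the single relation [b₁,d₂] = 1 omitted — is trivial. (Algebraic core of Lemma 4.1: the complement of the torus q(a₁′×c₂′) in M_k^n is simply connected.) -/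
open scoped commutatorElement

open Gen in
/-- The relators of `H(k,n)`: the same relators as those of `G(k,n,1,1)`,
except that the single relation `[b₁,d₂] = 1` (the case `i = 1`, i.e. `d₂`,
of the relator `[b₁,d_i]` below) is omitted. -/
def relsH (k n : ℕ) : Set (FreeGroup (Gen k)) :=
  { x |
    x = A2 k * ((Ct k)⁻¹ * A1 k * Ct k)⁻¹ ∨
    x = B2 k * ((Ct k)⁻¹ * B1 k * Ct k)⁻¹ ∨
    x = B1 k * ((Ct k)⁻¹ * B2 k * Ct k)⁻¹ ∨
    x = ⁅B2 k, Dt k⁆ ∨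
    x = ⁅(A1 k)⁻¹ * (B1 k)⁻¹ * A2 k, Dt k⁆ ∨
    x = ⁅(A2 k)⁻¹ * (B2 k)⁻¹ * A1 k, Dt k⁆ ∨
    x = (Ct k)⁻¹ * A1 k * A2 k * Ct k * (A1 k)⁻¹ * (A2 k)⁻¹ * (Dt k)⁻¹ ∨
    x = ⁅A1 k, (Dt k)⁻¹⁆ * (Ct k)⁻¹ ∨
    x = ⁅B1 k, Dt k⁆ ∨
    x = ⁅A1 k, B1 k⁆ * ⁅A2 k, B2 k⁆ ∨
    x = (List.ofFn fun i : Fin k => ⁅C k i, D k i⁆).prod * ⁅Ct k, Dt k⁆ ∨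
    (∃ i : Fin k, (i : ℕ) = 0 ∧
      (x = ⁅(B1 k)⁻¹, (D k i)⁻¹⁆ * (A1 k)⁻¹ ∨
       x = ⁅(A1 k)⁻¹, D k i⁆ * (B1 k)⁻¹ ∨
       x = ⁅(B2 k)⁻¹, (D k i)⁻¹⁆ * (C k i)⁻¹ ∨
       x = ⁅B2 k, (C k i)⁻¹⁆ ^ n * (D k i)⁻¹ ∨
       x = ⁅A1 k, C k i⁆ ∨ x = ⁅B1 k, C k i⁆ ∨
       x = ⁅A2 k, C k i⁆ ∨ x = ⁅A2 k, D k i⁆)) ∨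
    (∃ i : Fin k, (i : ℕ) = 1 ∧
      (x = ⁅(B2 k)⁻¹, (D k i)⁻¹⁆ * ((C k i) ^ 1)⁻¹ ∨
       x = ⁅B2 k, (C k i)⁻¹⁆ * ((D k i) ^ 1)⁻¹)) ∨
    (∃ i : Fin k, 2 ≤ (i : ℕ) ∧
      (x = ⁅(B2 k)⁻¹, (D k i)⁻¹⁆ * (C k i)⁻¹ ∨
       x = ⁅B2 k, (C k i)⁻¹⁆ * (D k i)⁻¹)) ∨
    (∃ i : Fin k, 1 ≤ (i : ℕ) ∧
      (x = ⁅A2 k, C k i⁆ ∨ x = ⁅A2 k, D k i⁆ ∨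
       x = ⁅A1 k, C k i⁆ ∨ ((i : ℕ) ≠ 1 ∧ x = ⁅B1 k, D k i⁆) ∨
       x = ⁅A1 k, D k i⁆ ∨ x = ⁅B1 k, C k i⁆)) }

/-- The group `H(k,n)` of Lemma 4.1: same presentation as `G(k,n,1,1)` with
the relation `[b₁,d₂] = 1` omitted. -/
abbrev H (k n : ℕ) : Type := PresentedGroup (relsH k n)

private lemma collapse {G : Type*} [Group G] (n : ℕ) (a1 b1 a2 b2 ct dt c1 d1 : G)
    (hB : b2 = ct⁻¹ * b1 * ct)
    (hC : b1 = ct⁻¹ * b2 * ct)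
    (h4 : b2 * dt * b2⁻¹ * dt⁻¹ = 1)
    (h5 : a1⁻¹ * b1⁻¹ * a2 * dt * (a1⁻¹ * b1⁻¹ * a2)⁻¹ * dt⁻¹ = 1)
    (h6 : a2⁻¹ * b2⁻¹ * a1 * dt * (a2⁻¹ * b2⁻¹ * a1)⁻¹ * dt⁻¹ = 1)
    (h8 : a1 * dt⁻¹ * a1⁻¹ * dt = ct)
    (h9 : b1 * dt * b1⁻¹ * dt⁻¹ = 1)
    (hs1 : b1⁻¹ * d1⁻¹ * b1 * d1 = a1)
    (hs2 : a1⁻¹ * d1 * a1 * d1⁻¹ = b1)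
    (hs3 : b2⁻¹ * d1⁻¹ * b2 * d1 = c1)
    (hs4 : (b2 * c1⁻¹ * b2⁻¹ * c1) ^ n = d1)
    (hs5 : a1 * c1 * a1⁻¹ * c1⁻¹ = 1)
    (hs6 : b1 * c1 * b1⁻¹ * c1⁻¹ = 1) :
    a1 = 1 ∧ b1 = 1 := by
  have h9e : b1 * dt = dt * b1 := by
    calc b1 * dt = (b1 * dt * b1⁻¹ * dt⁻¹) * (dt * b1) := by group
      _ = 1 * (dt * b1) := by rw [h9]
      _ = dt * b1 := one_mul _
  have h5e : a1⁻¹ * b1⁻¹ * a2 * dt = dt * (a1⁻¹ * b1⁻¹ * a2) := by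
    calc a1⁻¹ * b1⁻¹ * a2 * dt
        = (a1⁻¹ * b1⁻¹ * a2 * dt * (a1⁻¹ * b1⁻¹ * a2)⁻¹ * dt⁻¹) * (dt * (a1⁻¹ * b1⁻¹ * a2)) := by
          group
      _ = 1 * (dt * (a1⁻¹ * b1⁻¹ * a2)) := by rw [h5]
      _ = dt * (a1⁻¹ * b1⁻¹ * a2) := one_mul _
  have h4i : dt * b2 * dt⁻¹ * b2⁻¹ = 1 := by
    calc dt * b2 * dt⁻¹ * b2⁻¹ = (b2 * dt * b2⁻¹ * dt⁻¹)⁻¹ := by group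
      _ = (1 : G)⁻¹ := by rw [h4]
      _ = 1 := inv_one
  have h4e : b2⁻¹ * dt = dt * b2⁻¹ := by
    calc b2⁻¹ * dt = b2⁻¹ * (dt * b2 * dt⁻¹ * b2⁻¹) * b2 * (dt * b2⁻¹) := by group
      _ = b2⁻¹ * 1 * b2 * (dt * b2⁻¹) := by rw [h4i]
      _ = dt * b2⁻¹ := by group
  have h6i : dt * (a2⁻¹ * b2⁻¹ * a1) * dt⁻¹ * (a2⁻¹ * b2⁻¹ * a1)⁻¹ = 1 := by
    calc dt * (a2⁻¹ * b2⁻¹ * a1) * dt⁻¹ * (a2⁻¹ * b2⁻¹ * a1)⁻¹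
        = (a2⁻¹ * b2⁻¹ * a1 * dt * (a2⁻¹ * b2⁻¹ * a1)⁻¹ * dt⁻¹)⁻¹ := by group
      _ = (1 : G)⁻¹ := by rw [h6]
      _ = 1 := inv_one
  have h6e : (a2⁻¹ * b2⁻¹ * a1)⁻¹ * dt = dt * (a2⁻¹ * b2⁻¹ * a1)⁻¹ := by
    calc (a2⁻¹ * b2⁻¹ * a1)⁻¹ * dt
        = (a2⁻¹ * b2⁻¹ * a1)⁻¹ * (dt * (a2⁻¹ * b2⁻¹ * a1) * dt⁻¹ * (a2⁻¹ * b2⁻¹ * a1)⁻¹) *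
            (a2⁻¹ * b2⁻¹ * a1) * (dt * (a2⁻¹ * b2⁻¹ * a1)⁻¹) := by group
      _ = (a2⁻¹ * b2⁻¹ * a1)⁻¹ * 1 * (a2⁻¹ * b2⁻¹ * a1) * (dt * (a2⁻¹ * b2⁻¹ * a1)⁻¹) := by
          rw [h6i]
      _ = dt * (a2⁻¹ * b2⁻¹ * a1)⁻¹ := by group
  have e1 : dt⁻¹ * a1 * dt = ct⁻¹ * a1 := by rw [← h8]; group
  have st1 : dt⁻¹ * a2 * dt = b1 * ct⁻¹ * b1⁻¹ * a2 := by
    calc dt⁻¹ * a2 * dt = dt⁻¹ * (b1 * a1) * (a1⁻¹ * b1⁻¹ * a2 * dt) := by group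
      _ = dt⁻¹ * (b1 * a1) * (dt * (a1⁻¹ * b1⁻¹ * a2)) := by rw [h5e]
      _ = dt⁻¹ * (b1 * dt) * (dt⁻¹ * a1 * dt) * (a1⁻¹ * b1⁻¹ * a2) := by group
      _ = dt⁻¹ * (dt * b1) * (dt⁻¹ * a1 * dt) * (a1⁻¹ * b1⁻¹ * a2) := by rw [h9e]
      _ = b1 * (dt⁻¹ * a1 * dt) * (a1⁻¹ * b1⁻¹ * a2) := by group
      _ = b1 * (ct⁻¹ * a1) * (a1⁻¹ * b1⁻¹ * a2) := by rw [e1]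
      _ = b1 * ct⁻¹ * b1⁻¹ * a2 := by group
  have st2 : dt⁻¹ * a2 * dt = b2⁻¹ * ct⁻¹ * b2 * a2 := by
    calc dt⁻¹ * a2 * dt = dt⁻¹ * (b2⁻¹ * a1) * ((a2⁻¹ * b2⁻¹ * a1)⁻¹ * dt) := by group
      _ = dt⁻¹ * (b2⁻¹ * a1) * (dt * (a2⁻¹ * b2⁻¹ * a1)⁻¹) := by rw [h6e]
      _ = dt⁻¹ * (b2⁻¹ * dt) * (dt⁻¹ * a1 * dt) * (a2⁻¹ * b2⁻¹ * a1)⁻¹ := by group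
      _ = dt⁻¹ * (dt * b2⁻¹) * (dt⁻¹ * a1 * dt) * (a2⁻¹ * b2⁻¹ * a1)⁻¹ := by rw [h4e]
      _ = b2⁻¹ * (dt⁻¹ * a1 * dt) * (a2⁻¹ * b2⁻¹ * a1)⁻¹ := by group
      _ = b2⁻¹ * (ct⁻¹ * a1) * (a2⁻¹ * b2⁻¹ * a1)⁻¹ := by rw [e1]
      _ = b2⁻¹ * ct⁻¹ * b2 * a2 := by group
  have st3 : b1 * ct⁻¹ * b1⁻¹ = b2⁻¹ * ct⁻¹ * b2 := mul_right_cancel (st1.symm.trans st2)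
  have st4 : b2 * b1 * ct⁻¹ = ct⁻¹ * (b2 * b1) := by
    calc b2 * b1 * ct⁻¹ = b2 * (b1 * ct⁻¹ * b1⁻¹) * b1 := by group
      _ = b2 * (b2⁻¹ * ct⁻¹ * b2) * b1 := by rw [st3]
      _ = ct⁻¹ * (b2 * b1) := by group
  have conjb1 : ct * b1 * ct⁻¹ = b2 := by rw [hC]; group
  have conjb2 : ct * b2 * ct⁻¹ = b1 := by rw [hB]; group
  have st5 : b1 * b2 = b2 * b1 := by
    calc b1 * b2 = ct⁻¹ * ((ct * b1 * ct⁻¹) * (ct * b2 * ct⁻¹)) * ct := by group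
      _ = ct⁻¹ * (b2 * b1) * ct := by rw [conjb1, conjb2]
      _ = (b2 * b1 * ct⁻¹) * ct := by rw [← st4]
      _ = b2 * b1 := by group
  have f2 : d1⁻¹ * b1 * d1 = b1 * a1 := by rw [← hs1]; group
  have f3 : d1⁻¹ * b2 * d1 = b2 * c1 := by rw [← hs3]; group
  have hs5e : a1 * c1 = c1 * a1 := by
    calc a1 * c1 = (a1 * c1 * a1⁻¹ * c1⁻¹) * (c1 * a1) := by group
      _ = 1 * (c1 * a1) := by rw [hs5]
      _ = c1 * a1 := one_mul _
  have hs6e : b1 * c1 = c1 * b1 := by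
    calc b1 * c1 = (b1 * c1 * b1⁻¹ * c1⁻¹) * (c1 * b1) := by group
      _ = 1 * (c1 * b1) := by rw [hs6]
      _ = c1 * b1 := one_mul _
  have e2 : b1 * a1 * (b2 * c1) = b2 * c1 * (b1 * a1) := by
    calc b1 * a1 * (b2 * c1) = (d1⁻¹ * b1 * d1) * (d1⁻¹ * b2 * d1) := by rw [f2, f3]
      _ = d1⁻¹ * (b1 * b2) * d1 := by group
      _ = d1⁻¹ * (b2 * b1) * d1 := by rw [st5]
      _ = (d1⁻¹ * b2 * d1) * (d1⁻¹ * b1 * d1) := by group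
      _ = b2 * c1 * (b1 * a1) := by rw [f2, f3]
  have e3 : b1 * a1 * b2 * c1 = b1 * (b2 * a1) * c1 := by
    calc b1 * a1 * b2 * c1 = b1 * a1 * (b2 * c1) := by group
      _ = b2 * c1 * (b1 * a1) := e2
      _ = b2 * (c1 * b1) * a1 := by group
      _ = b2 * (b1 * c1) * a1 := by rw [← hs6e]
      _ = b2 * b1 * (c1 * a1) := by group
      _ = b2 * b1 * (a1 * c1) := by rw [← hs5e]
      _ = (b2 * b1) * a1 * c1 := by group
      _ = (b1 * b2) * a1 * c1 := by rw [← st5]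
      _ = b1 * (b2 * a1) * c1 := by group
  have st6 : a1 * b2 = b2 * a1 := by
    have h' := mul_right_cancel e3
    have h'' : b1 * (a1 * b2) = b1 * (b2 * a1) := by
      calc b1 * (a1 * b2) = b1 * a1 * b2 := by group
        _ = b1 * (b2 * a1) := h'
    exact mul_left_cancel h''
  have ca1c1 : Commute a1 c1 := hs5e
  have ca1b2 : Commute a1 b2 := st6
  have cx : Commute a1 (b2 * c1⁻¹ * b2⁻¹ * c1) :=
    ((ca1b2.mul_right ca1c1.inv_right).mul_right ca1b2.inv_right).mul_right ca1c1
  have cd1 : Commute a1 d1 := hs4 ▸ cx.pow_right n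
  have hb1 : b1 = 1 := by
    calc b1 = a1⁻¹ * (d1 * a1) * d1⁻¹ := by rw [← hs2]; group
      _ = a1⁻¹ * (a1 * d1) * d1⁻¹ := by rw [← cd1.eq]
      _ = 1 := by group
  have ha1 : a1 = 1 := by
    calc a1 = b1⁻¹ * d1⁻¹ * b1 * d1 := hs1.symm
      _ = 1 := by rw [hb1]; group
  exact ⟨ha1, hb1⟩

private def pg (k n : ℕ) (g : Gen k) : H k n :=
  PresentedGroup.mk (relsH k n) (FreeGroup.of g)
/-- algebraic core of Lemma 4.1: for `k ≥ 2` and `n ≥ 1`,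
the group `H(k,n)` is trivial. -/
theorem H_trivial (k n : ℕ) (hk : 2 ≤ k) (hn : 1 ≤ n) :
    ∀ x : H k n, x = 1 := by
  obtain ⟨i0, hi0⟩ : ∃ i : Fin k, (i : ℕ) = 0 := ⟨⟨0, by omega⟩, rfl⟩
  have E : ∀ r ∈ relsH k n, PresentedGroup.mk (relsH k n) r = 1 := fun r hr =>
    (QuotientGroup.eq_one_iff r).mpr (Subgroup.subset_normalClosure hr)
  have memrel : ∀ r : FreeGroup (Gen k),
      (r = Gen.A2 k * ((Gen.Ct k)⁻¹ * Gen.A1 k * Gen.Ct k)⁻¹ ∨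
       r = Gen.B2 k * ((Gen.Ct k)⁻¹ * Gen.B1 k * Gen.Ct k)⁻¹ ∨
       r = Gen.B1 k * ((Gen.Ct k)⁻¹ * Gen.B2 k * Gen.Ct k)⁻¹ ∨
       r = ⁅Gen.B2 k, Gen.Dt k⁆ ∨
       r = ⁅(Gen.A1 k)⁻¹ * (Gen.B1 k)⁻¹ * Gen.A2 k, Gen.Dt k⁆ ∨
       r = ⁅(Gen.A2 k)⁻¹ * (Gen.B2 k)⁻¹ * Gen.A1 k, Gen.Dt k⁆ ∨
       r = (Gen.Ct k)⁻¹ * Gen.A1 k * Gen.A2 k * Gen.Ct k * (Gen.A1 k)⁻¹ * (Gen.A2 k)⁻¹ *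
            (Gen.Dt k)⁻¹ ∨
       r = ⁅Gen.A1 k, (Gen.Dt k)⁻¹⁆ * (Gen.Ct k)⁻¹ ∨
       r = ⁅Gen.B1 k, Gen.Dt k⁆ ∨
       (∃ i : Fin k, (i : ℕ) = 0 ∧
         (r = ⁅(Gen.B1 k)⁻¹, (Gen.D k i)⁻¹⁆ * (Gen.A1 k)⁻¹ ∨
          r = ⁅(Gen.A1 k)⁻¹, Gen.D k i⁆ * (Gen.B1 k)⁻¹ ∨
          r = ⁅(Gen.B2 k)⁻¹, (Gen.D k i)⁻¹⁆ * (Gen.C k i)⁻¹ ∨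
          r = ⁅Gen.B2 k, (Gen.C k i)⁻¹⁆ ^ n * (Gen.D k i)⁻¹ ∨
          r = ⁅Gen.A1 k, Gen.C k i⁆ ∨ r = ⁅Gen.B1 k, Gen.C k i⁆)) ∨
       (∃ i : Fin k, (i : ℕ) = 1 ∧
         (r = ⁅(Gen.B2 k)⁻¹, (Gen.D k i)⁻¹⁆ * ((Gen.C k i) ^ 1)⁻¹ ∨
          r = ⁅Gen.B2 k, (Gen.C k i)⁻¹⁆ * ((Gen.D k i) ^ 1)⁻¹)) ∨
       (∃ i : Fin k, 2 ≤ (i : ℕ) ∧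
         (r = ⁅(Gen.B2 k)⁻¹, (Gen.D k i)⁻¹⁆ * (Gen.C k i)⁻¹ ∨
          r = ⁅Gen.B2 k, (Gen.C k i)⁻¹⁆ * (Gen.D k i)⁻¹))) →
      r ∈ relsH k n := by
    intro r h
    simp only [relsH, Set.mem_setOf_eq]
    rcases h with h|h|h|h|h|h|h|h|h|⟨i,hi,h|h|h|h|h|h⟩|⟨i,hi,h|h⟩|⟨i,hi,h|h⟩
    · exact Or.inl h
    · exact Or.inr (Or.inl h)
    · exact Or.inr (Or.inr (Or.inl h))
    · exact Or.inr (Or.inr (Or.inr (Or.inl h)))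
    · exact Or.inr (Or.inr (Or.inr (Or.inr (Or.inl h))))
    · exact Or.inr (Or.inr (Or.inr (Or.inr (Or.inr (Or.inl h)))))
    · exact Or.inr (Or.inr (Or.inr (Or.inr (Or.inr (Or.inr (Or.inl h))))))
    · exact Or.inr (Or.inr (Or.inr (Or.inr (Or.inr (Or.inr (Or.inr (Or.inl h)))))))
    · exact Or.inr (Or.inr (Or.inr (Or.inr (Or.inr (Or.inr (Or.inr (Or.inr (Or.inl h))))))))
    · exact Or.inr (Or.inr (Or.inr (Or.inr (Or.inr (Or.inr (Or.inr (Or.inr (Or.inr (Or.inr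
        (Or.inr (Or.inl ⟨i, hi, Or.inl h⟩)))))))))))
    · exact Or.inr (Or.inr (Or.inr (Or.inr (Or.inr (Or.inr (Or.inr (Or.inr (Or.inr (Or.inr
        (Or.inr (Or.inl ⟨i, hi, Or.inr (Or.inl h)⟩)))))))))))
    · exact Or.inr (Or.inr (Or.inr (Or.inr (Or.inr (Or.inr (Or.inr (Or.inr (Or.inr (Or.inr
        (Or.inr (Or.inl ⟨i, hi, Or.inr (Or.inr (Or.inl h))⟩)))))))))))
    · exact Or.inr (Or.inr (Or.inr (Or.inr (Or.inr (Or.inr (Or.inr (Or.inr (Or.inr (Or.inr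
        (Or.inr (Or.inl ⟨i, hi, Or.inr (Or.inr (Or.inr (Or.inl h)))⟩)))))))))))
    · exact Or.inr (Or.inr (Or.inr (Or.inr (Or.inr (Or.inr (Or.inr (Or.inr (Or.inr (Or.inr
        (Or.inr (Or.inl ⟨i, hi, Or.inr (Or.inr (Or.inr (Or.inr (Or.inl h))))⟩)))))))))))
    · exact Or.inr (Or.inr (Or.inr (Or.inr (Or.inr (Or.inr (Or.inr (Or.inr (Or.inr (Or.inr
        (Or.inr (Or.inl ⟨i, hi, Or.inr (Or.inr (Or.inr (Or.inr (Or.inr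
          (Or.inl h)))))⟩)))))))))))
    · exact Or.inr (Or.inr (Or.inr (Or.inr (Or.inr (Or.inr (Or.inr (Or.inr (Or.inr (Or.inr
        (Or.inr (Or.inr (Or.inl ⟨i, hi, Or.inl h⟩))))))))))))
    · exact Or.inr (Or.inr (Or.inr (Or.inr (Or.inr (Or.inr (Or.inr (Or.inr (Or.inr (Or.inr
        (Or.inr (Or.inr (Or.inl ⟨i, hi, Or.inr h⟩))))))))))))
    · exact Or.inr (Or.inr (Or.inr (Or.inr (Or.inr (Or.inr (Or.inr (Or.inr (Or.inr (Or.inr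
        (Or.inr (Or.inr (Or.inr (Or.inl ⟨i, hi, Or.inl h⟩)))))))))))))
    · exact Or.inr (Or.inr (Or.inr (Or.inr (Or.inr (Or.inr (Or.inr (Or.inr (Or.inr (Or.inr
        (Or.inr (Or.inr (Or.inr (Or.inl ⟨i, hi, Or.inr h⟩)))))))))))))
  have hA : pg k n Gen.a2 = (pg k n Gen.ct)⁻¹ * pg k n Gen.a1 * pg k n Gen.ct := by
    refine mul_inv_eq_one.mp ?_
    have h := E _ (memrel _ (Or.inl rfl))
    rw [← h]
    simp only [pg, Gen.A1, Gen.A2, Gen.Ct, map_mul, map_inv]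
  have hB : pg k n Gen.b2 = (pg k n Gen.ct)⁻¹ * pg k n Gen.b1 * pg k n Gen.ct := by
    refine mul_inv_eq_one.mp ?_
    have h := E _ (memrel _ (Or.inr (Or.inl rfl)))
    rw [← h]
    simp only [pg, Gen.B1, Gen.B2, Gen.Ct, map_mul, map_inv]
  have hC : pg k n Gen.b1 = (pg k n Gen.ct)⁻¹ * pg k n Gen.b2 * pg k n Gen.ct := by
    refine mul_inv_eq_one.mp ?_
    have h := E _ (memrel _ (Or.inr (Or.inr (Or.inl rfl))))
    rw [← h]
    simp only [pg, Gen.B1, Gen.B2, Gen.Ct, map_mul, map_inv]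
  have h4 : pg k n Gen.b2 * pg k n Gen.dt * (pg k n Gen.b2)⁻¹ * (pg k n Gen.dt)⁻¹ = 1 := by
    have h := E _ (memrel _ (Or.inr (Or.inr (Or.inr (Or.inl rfl)))))
    rw [← h]
    simp only [pg, Gen.B2, Gen.Dt, commutatorElement_def, map_mul, map_inv]
  have h5 : (pg k n Gen.a1)⁻¹ * (pg k n Gen.b1)⁻¹ * pg k n Gen.a2 * pg k n Gen.dt *
      ((pg k n Gen.a1)⁻¹ * (pg k n Gen.b1)⁻¹ * pg k n Gen.a2)⁻¹ * (pg k n Gen.dt)⁻¹ = 1 := by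
    have h := E _ (memrel _ (Or.inr (Or.inr (Or.inr (Or.inr (Or.inl rfl))))))
    rw [← h]
    simp only [pg, Gen.A1, Gen.B1, Gen.A2, Gen.Dt, commutatorElement_def, map_mul, map_inv]
  have h6 : (pg k n Gen.a2)⁻¹ * (pg k n Gen.b2)⁻¹ * pg k n Gen.a1 * pg k n Gen.dt *
      ((pg k n Gen.a2)⁻¹ * (pg k n Gen.b2)⁻¹ * pg k n Gen.a1)⁻¹ * (pg k n Gen.dt)⁻¹ = 1 := by
    have h := E _ (memrel _ (Or.inr (Or.inr (Or.inr (Or.inr (Or.inr (Or.inl rfl)))))))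
    rw [← h]
    simp only [pg, Gen.A1, Gen.B2, Gen.A2, Gen.Dt, commutatorElement_def, map_mul, map_inv]
  have h7 : (pg k n Gen.ct)⁻¹ * pg k n Gen.a1 * pg k n Gen.a2 * pg k n Gen.ct *
      (pg k n Gen.a1)⁻¹ * (pg k n Gen.a2)⁻¹ = pg k n Gen.dt := by
    refine mul_inv_eq_one.mp ?_
    have h := E _ (memrel _ (Or.inr (Or.inr (Or.inr (Or.inr (Or.inr (Or.inr (Or.inl rfl))))))))
    rw [← h]
    simp only [pg, Gen.A1, Gen.A2, Gen.Ct, Gen.Dt, map_mul, map_inv]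
  have h8 : pg k n Gen.a1 * (pg k n Gen.dt)⁻¹ * (pg k n Gen.a1)⁻¹ * pg k n Gen.dt =
      pg k n Gen.ct := by
    refine mul_inv_eq_one.mp ?_
    have h := E _ (memrel _ (Or.inr (Or.inr (Or.inr (Or.inr (Or.inr (Or.inr (Or.inr
      (Or.inl rfl)))))))))
    rw [← h]
    simp only [pg, Gen.A1, Gen.Ct, Gen.Dt, commutatorElement_def, map_mul, map_inv, inv_inv]
  have h9 : pg k n Gen.b1 * pg k n Gen.dt * (pg k n Gen.b1)⁻¹ * (pg k n Gen.dt)⁻¹ = 1 := by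
    have h := E _ (memrel _ (Or.inr (Or.inr (Or.inr (Or.inr (Or.inr (Or.inr (Or.inr (Or.inr
      (Or.inl rfl))))))))))
    rw [← h]
    simp only [pg, Gen.B1, Gen.Dt, commutatorElement_def, map_mul, map_inv]
  have hs1 : (pg k n Gen.b1)⁻¹ * (pg k n (Gen.d i0))⁻¹ * pg k n Gen.b1 * pg k n (Gen.d i0) =
      pg k n Gen.a1 := by
    refine mul_inv_eq_one.mp ?_
    have h := E _ (memrel _ (Or.inr (Or.inr (Or.inr (Or.inr (Or.inr (Or.inr (Or.inr (Or.inr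
      (Or.inr (Or.inl ⟨i0, hi0, Or.inl rfl⟩)))))))))))
    rw [← h]
    simp only [pg, Gen.A1, Gen.B1, Gen.D, commutatorElement_def, map_mul, map_inv, inv_inv]
  have hs2 : (pg k n Gen.a1)⁻¹ * pg k n (Gen.d i0) * pg k n Gen.a1 * (pg k n (Gen.d i0))⁻¹ =
      pg k n Gen.b1 := by
    refine mul_inv_eq_one.mp ?_
    have h := E _ (memrel _ (Or.inr (Or.inr (Or.inr (Or.inr (Or.inr (Or.inr (Or.inr (Or.inr
      (Or.inr (Or.inl ⟨i0, hi0, Or.inr (Or.inl rfl)⟩)))))))))))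
    rw [← h]
    simp only [pg, Gen.A1, Gen.B1, Gen.D, commutatorElement_def, map_mul, map_inv, inv_inv]
  have hs3 : (pg k n Gen.b2)⁻¹ * (pg k n (Gen.d i0))⁻¹ * pg k n Gen.b2 * pg k n (Gen.d i0) =
      pg k n (Gen.c i0) := by
    refine mul_inv_eq_one.mp ?_
    have h := E _ (memrel _ (Or.inr (Or.inr (Or.inr (Or.inr (Or.inr (Or.inr (Or.inr (Or.inr
      (Or.inr (Or.inl ⟨i0, hi0, Or.inr (Or.inr (Or.inl rfl))⟩)))))))))))
    rw [← h]
    simp only [pg, Gen.B2, Gen.C, Gen.D, commutatorElement_def, map_mul, map_inv, inv_inv]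
  have hs4 : (pg k n Gen.b2 * (pg k n (Gen.c i0))⁻¹ * (pg k n Gen.b2)⁻¹ * pg k n (Gen.c i0)) ^ n =
      pg k n (Gen.d i0) := by
    refine mul_inv_eq_one.mp ?_
    have h := E _ (memrel _ (Or.inr (Or.inr (Or.inr (Or.inr (Or.inr (Or.inr (Or.inr (Or.inr
      (Or.inr (Or.inl ⟨i0, hi0, Or.inr (Or.inr (Or.inr (Or.inl rfl)))⟩)))))))))))
    rw [← h]
    simp only [pg, Gen.B2, Gen.C, Gen.D, commutatorElement_def, map_mul, map_inv, map_pow,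
      inv_inv]
  have hs5 : pg k n Gen.a1 * pg k n (Gen.c i0) * (pg k n Gen.a1)⁻¹ * (pg k n (Gen.c i0))⁻¹ =
      1 := by
    have h := E _ (memrel _ (Or.inr (Or.inr (Or.inr (Or.inr (Or.inr (Or.inr (Or.inr (Or.inr
      (Or.inr (Or.inl ⟨i0, hi0, Or.inr (Or.inr (Or.inr (Or.inr (Or.inl rfl))))⟩)))))))))))
    rw [← h]
    simp only [pg, Gen.A1, Gen.C, commutatorElement_def, map_mul, map_inv]
  have hs6 : pg k n Gen.b1 * pg k n (Gen.c i0) * (pg k n Gen.b1)⁻¹ * (pg k n (Gen.c i0))⁻¹ =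
      1 := by
    have h := E _ (memrel _ (Or.inr (Or.inr (Or.inr (Or.inr (Or.inr (Or.inr (Or.inr (Or.inr
      (Or.inr (Or.inl ⟨i0, hi0, Or.inr (Or.inr (Or.inr (Or.inr (Or.inr rfl))))⟩)))))))))))
    rw [← h]
    simp only [pg, Gen.B1, Gen.C, commutatorElement_def, map_mul, map_inv]
  obtain ⟨ha1, hb1⟩ := collapse n (pg k n Gen.a1) (pg k n Gen.b1) (pg k n Gen.a2)
    (pg k n Gen.b2) (pg k n Gen.ct) (pg k n Gen.dt) (pg k n (Gen.c i0)) (pg k n (Gen.d i0))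
    hB hC h4 h5 h6 h8 h9 hs1 hs2 hs3 hs4 hs5 hs6
  have hb2 : pg k n Gen.b2 = 1 := by rw [hB, hb1]; group
  have ha2 : pg k n Gen.a2 = 1 := by rw [hA, ha1]; group
  have hdt : pg k n Gen.dt = 1 := by rw [← h7, ha1, ha2]; group
  have hct : pg k n Gen.ct = 1 := by rw [← h8, ha1, hdt]; group
  have hcd : ∀ i : Fin k, pg k n (Gen.c i) = 1 ∧ pg k n (Gen.d i) = 1 := by
    intro i
    obtain h0 | h1 | h2 : (i : ℕ) = 0 ∨ (i : ℕ) = 1 ∨ 2 ≤ (i : ℕ) := by omega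
    · have hc : pg k n (Gen.c i) = 1 := by
        have h := E _ (memrel _ (Or.inr (Or.inr (Or.inr (Or.inr (Or.inr (Or.inr (Or.inr (Or.inr
          (Or.inr (Or.inl ⟨i, h0, Or.inr (Or.inr (Or.inl rfl))⟩)))))))))))
        have h' : (pg k n Gen.b2)⁻¹ * (pg k n (Gen.d i))⁻¹ * pg k n Gen.b2 * pg k n (Gen.d i) =
            pg k n (Gen.c i) := by
          refine mul_inv_eq_one.mp ?_
          rw [← h]
          simp only [pg, Gen.B2, Gen.C, Gen.D, commutatorElement_def, map_mul, map_inv, inv_inv]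
        rw [← h', hb2]; group
      have hd : pg k n (Gen.d i) = 1 := by
        have h := E _ (memrel _ (Or.inr (Or.inr (Or.inr (Or.inr (Or.inr (Or.inr (Or.inr (Or.inr
          (Or.inr (Or.inl ⟨i, h0, Or.inr (Or.inr (Or.inr (Or.inl rfl)))⟩)))))))))))
        have h' : (pg k n Gen.b2 * (pg k n (Gen.c i))⁻¹ * (pg k n Gen.b2)⁻¹ *
            pg k n (Gen.c i)) ^ n = pg k n (Gen.d i) := by
          refine mul_inv_eq_one.mp ?_
          rw [← h]
          simp only [pg, Gen.B2, Gen.C, Gen.D, commutatorElement_def, map_mul, map_inv, map_pow,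
            inv_inv]
        rw [← h', hb2]
        simp
      exact ⟨hc, hd⟩
    · have hc : pg k n (Gen.c i) = 1 := by
        have h := E _ (memrel _ (Or.inr (Or.inr (Or.inr (Or.inr (Or.inr (Or.inr (Or.inr (Or.inr
          (Or.inr (Or.inr (Or.inl ⟨i, h1, Or.inl rfl⟩))))))))))))
        have h' : (pg k n Gen.b2)⁻¹ * (pg k n (Gen.d i))⁻¹ * pg k n Gen.b2 * pg k n (Gen.d i) =
            pg k n (Gen.c i) := by
          refine mul_inv_eq_one.mp ?_
          rw [← h]
          simp only [pg, Gen.B2, Gen.C, Gen.D, commutatorElement_def, map_mul, map_inv, map_pow,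
            inv_inv, pow_one]
        rw [← h', hb2]; group
      have hd : pg k n (Gen.d i) = 1 := by
        have h := E _ (memrel _ (Or.inr (Or.inr (Or.inr (Or.inr (Or.inr (Or.inr (Or.inr (Or.inr
          (Or.inr (Or.inr (Or.inl ⟨i, h1, Or.inr rfl⟩))))))))))))
        have h' : pg k n Gen.b2 * (pg k n (Gen.c i))⁻¹ * (pg k n Gen.b2)⁻¹ * pg k n (Gen.c i) =
            pg k n (Gen.d i) := by
          refine mul_inv_eq_one.mp ?_
          rw [← h]
          simp only [pg, Gen.B2, Gen.C, Gen.D, commutatorElement_def, map_mul, map_inv, map_pow,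
            inv_inv, pow_one]
        rw [← h', hb2]; group
      exact ⟨hc, hd⟩
    · have hc : pg k n (Gen.c i) = 1 := by
        have h := E _ (memrel _ (Or.inr (Or.inr (Or.inr (Or.inr (Or.inr (Or.inr (Or.inr (Or.inr
          (Or.inr (Or.inr (Or.inr ⟨i, h2, Or.inl rfl⟩))))))))))))
        have h' : (pg k n Gen.b2)⁻¹ * (pg k n (Gen.d i))⁻¹ * pg k n Gen.b2 * pg k n (Gen.d i) =
            pg k n (Gen.c i) := by
          refine mul_inv_eq_one.mp ?_
          rw [← h]
          simp only [pg, Gen.B2, Gen.C, Gen.D, commutatorElement_def, map_mul, map_inv, inv_inv]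
        rw [← h', hb2]; group
      have hd : pg k n (Gen.d i) = 1 := by
        have h := E _ (memrel _ (Or.inr (Or.inr (Or.inr (Or.inr (Or.inr (Or.inr (Or.inr (Or.inr
          (Or.inr (Or.inr (Or.inr ⟨i, h2, Or.inr rfl⟩))))))))))))
        have h' : pg k n Gen.b2 * (pg k n (Gen.c i))⁻¹ * (pg k n Gen.b2)⁻¹ * pg k n (Gen.c i) =
            pg k n (Gen.d i) := by
          refine mul_inv_eq_one.mp ?_
          rw [← h]
          simp only [pg, Gen.B2, Gen.C, Gen.D, commutatorElement_def, map_mul, map_inv, inv_inv]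
        rw [← h', hb2]; group
      exact ⟨hc, hd⟩
  have hgen : ∀ j : Gen k, (PresentedGroup.of j : H k n) ∈ (⊥ : Subgroup (H k n)) := by
    intro j
    rw [Subgroup.mem_bot]
    show pg k n j = 1
    cases j with
    | a1 => exact ha1
    | b1 => exact hb1
    | a2 => exact ha2
    | b2 => exact hb2
    | ct => exact hct
    | dt => exact hdt
    | c i => exact (hcd i).1
    | d i => exact (hcd i).2
  intro x
  exact Subgroup.mem_bot.mp (PresentedGroup.generated_by (relsH k n) ⊥ hgen x)
end
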